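/- arXiv:1008.4362 — 4 statements merged into one kernel-verified Lean document; each statement's English description precedes it below -/
import Mathlib

section
/- For real numbers $\lambda_1, \ldots, \lambda_N$ with $N$ even, the Pfaffian of the antisymmetric matrix $\mathbf{T}(\boldsymbol\lambda) = [\mathrm{sgn}(\lambda_n - \lambda_m)]_{m,n=1}^N$ equals $\prod_{m<n}\mathrm{sgn}(\lambda_n - \lambda_m)$. -/
/-- The Pfaffian of a `2M × 2M` real matrix. -/
noncomputable def pf {M : ℕ} (A : Matrix (Fin (2*M)) (Fin (2*M)) ℝ) : ℝ :=
  (1 / (2^M * (Nat.factorial M) : ℝ)) *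
    ∑ σ : Equiv.Perm (Fin (2*M)), ((Equiv.Perm.sign σ : ℤ) : ℝ) *
      ∏ m : Fin M,
        A (σ ⟨2*(m:ℕ), by have := m.isLt; omega⟩) (σ ⟨2*(m:ℕ)+1, by have := m.isLt; omega⟩)

open Equiv Equiv.Perm Finset

namespace PfProof

variable {M : ℕ}

variable {M : ℕ}

def idx0 {M : ℕ} (m : Fin M) : Fin (2*M) := ⟨2*(m:ℕ), by have := m.isLt; omega⟩
def idx1 {M : ℕ} (m : Fin M) : Fin (2*M) := ⟨2*(m:ℕ)+1, by have := m.isLt; omega⟩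

/-- The permutation sum in the Pfaffian. -/
noncomputable def S (M : ℕ) (l : Fin (2*M) → ℝ) : ℝ :=
  ∑ σ : Perm (Fin (2*M)), ((sign σ : ℤ) : ℝ) *
    ∏ m : Fin M, Real.sign (l (σ (idx1 m)) - l (σ (idx0 m)))

/-- The pairs set. -/
def P2 (n : ℕ) : Finset (Fin n × Fin n) :=
  Finset.univ.filter (fun q : Fin n × Fin n => q.1 < q.2)

lemma sign_sq (τ : Perm (Fin n)) : ((sign τ : ℤ) : ℝ) * ((sign τ : ℤ) : ℝ) = 1 := by
  rcases Int.units_eq_one_or (sign τ) with h | h <;> rw [h] <;> norm_num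

lemma sign_strictMono {l : Fin n → ℝ} (h : StrictMono l) {i j : Fin n} (hij : i < j) :
    Real.sign (l j - l i) = 1 :=
  Real.sign_of_pos (sub_pos.2 (h hij))

lemma sign_strictMono' {l : Fin n → ℝ} (h : StrictMono l) {i j : Fin n} (hij : j < i) :
    Real.sign (l j - l i) = -1 :=
  Real.sign_of_neg (sub_neg.2 (h hij))

lemma S_noninj {l : Fin (2*M) → ℝ} (h : ¬ Function.Injective l) : S M l = 0 := by
  simp only [Function.Injective, not_forall] at h
  obtain ⟨i, j, hlij, hij⟩ := h
  have hls : ∀ k, l (Equiv.swap i j k) = l k := by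
    intro k
    rcases eq_or_ne k i with rfl | hki
    · rw [Equiv.swap_apply_left, hlij]
    rcases eq_or_ne k j with rfl | hkj
    · rw [Equiv.swap_apply_right, hlij]
    · rw [Equiv.swap_apply_of_ne_of_ne hki hkj]
  refine Finset.sum_involution (fun σ _ => Equiv.swap i j * σ) ?_ ?_ (fun _ _ => Finset.mem_univ _) ?_
  · intro σ _
    have hsign : ((sign (Equiv.swap i j * σ) : ℤ) : ℝ) = -((sign σ : ℤ) : ℝ) := by
      rw [Perm.sign_mul, sign_swap hij]; push_cast; ring
    have hprod : ∀ m : Fin M,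
        l ((Equiv.swap i j * σ) (idx1 m)) - l ((Equiv.swap i j * σ) (idx0 m))
          = l (σ (idx1 m)) - l (σ (idx0 m)) := by
      intro m
      simp only [Perm.mul_apply, hls]
    simp only [hprod, hsign]
    ring
  · intro σ _ _ hgσ
    apply hij
    have h1 : Equiv.swap i j = 1 := by
      have h2 := congrArg (· * σ⁻¹) hgσ
      simpa [mul_assoc] using h2
    have h3 := congrArg (fun e : Perm (Fin (2*M)) => e i) h1
    simp only [Equiv.swap_apply_left, Perm.one_apply] at h3
    exact h3.symm
  · intro σ _
    simp only [← mul_assoc, Equiv.swap_mul_self, one_mul]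

lemma prod_noninj {n : ℕ} {l : Fin n → ℝ} (h : ¬ Function.Injective l) :
    ∏ q ∈ P2 n, Real.sign (l q.2 - l q.1) = 0 := by
  simp only [Function.Injective, not_forall] at h
  obtain ⟨i, j, hlij, hij⟩ := h
  rcases lt_or_gt_of_ne hij with hlt | hlt
  · exact Finset.prod_eq_zero (i := (i, j)) (by simp [P2, hlt]) (by simp only; rw [← hlij, sub_self, Real.sign_zero])
  · exact Finset.prod_eq_zero (i := (j, i)) (by simp [P2, hlt]) (by simp only; rw [hlij, sub_self, Real.sign_zero])


variable {n : ℕ}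


variable {n : ℕ}

lemma signAux_eq_sign (τ : Perm (Fin n)) : signAux τ = sign τ := by
  refine Equiv.Perm.swap_induction_on τ ?_ ?_
  · rw [signAux_one, map_one]
  · intro f x y hxy ih
    rw [signAux_mul, map_mul, ih, signAux_swap hxy, sign_swap hxy]

/-- Product over ordered pairs of the inversion indicator equals the sign. -/
lemma prod_inversions (τ : Perm (Fin n)) :
    ∏ q ∈ Finset.univ.filter (fun q : Fin n × Fin n => q.1 < q.2),
      (if τ q.1 < τ q.2 then (1:ℝ) else -1) = ((sign τ : ℤ) : ℝ) := by
  rw [← signAux_eq_sign]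
  have : ((signAux τ : ℤ) : ℝ)
      = ∏ x ∈ finPairsLT n, (if τ x.1 ≤ τ x.2 then (-1:ℝ) else 1) := by
    rw [signAux]
    push_cast
    refine Finset.prod_congr rfl fun x _ => ?_
    split <;> norm_num
  rw [this]
  refine Finset.prod_nbij' (fun q => ⟨q.2, q.1⟩) (fun x => (x.2, x.1)) ?_ ?_ ?_ ?_ ?_
  · intro q hq
    simp only [Finset.mem_filter] at hq
    exact mem_finPairsLT.2 hq.2
  · intro x hx
    simp only [Finset.mem_filter, Finset.mem_univ, true_and]
    exact mem_finPairsLT.1 hx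
  · intro q _; rfl
  · intro x _; rfl
  · intro q hq
    simp only [Finset.mem_filter] at hq
    have hne : τ q.1 ≠ τ q.2 := fun h => hq.2.ne (τ.injective h)
    rcases lt_or_gt_of_ne hne with h | h
    · rw [if_pos h, if_neg (not_le.2 h)]
    · rw [if_neg (not_lt.2 h.le), if_pos h.le]



lemma prod_sign_comp (l : Fin n → ℝ) (τ : Perm (Fin n)) :
    ∏ q ∈ P2 n, Real.sign (l (τ q.2) - l (τ q.1))
      = ((sign τ : ℤ) : ℝ) * ∏ q ∈ P2 n, Real.sign (l q.2 - l q.1) := by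
  classical
  have key : ∀ q ∈ P2 n, Real.sign (l (τ q.2) - l (τ q.1))
      = (if τ q.1 < τ q.2 then (1:ℝ) else -1) *
        Real.sign (l ((if τ q.1 < τ q.2 then (τ q.1, τ q.2) else (τ q.2, τ q.1)) : Fin n × Fin n).2
          - l ((if τ q.1 < τ q.2 then (τ q.1, τ q.2) else (τ q.2, τ q.1)) : Fin n × Fin n).1) := by
    intro q hq
    split
    · rw [one_mul]
    · have : l (τ q.2) - l (τ q.1) = -(l (τ q.1) - l (τ q.2)) := by ring
      rw [this, Real.sign_neg]; ring
  rw [Finset.prod_congr rfl key, Finset.prod_mul_distrib]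
  congr 1
  · exact prod_inversions τ
  · refine Finset.prod_nbij'
      (fun q => if τ q.1 < τ q.2 then (τ q.1, τ q.2) else (τ q.2, τ q.1))
      (fun q => if τ⁻¹ q.1 < τ⁻¹ q.2 then (τ⁻¹ q.1, τ⁻¹ q.2) else (τ⁻¹ q.2, τ⁻¹ q.1))
      ?_ ?_ ?_ ?_ ?_
    · intro q hq
      simp only [P2, Finset.mem_filter, Finset.mem_univ, true_and] at hq ⊢
      have hne : τ q.1 ≠ τ q.2 := fun h => hq.ne (τ.injective h)
      split
      · assumption
      · exact lt_of_le_of_ne (not_lt.1 (by assumption)) (Ne.symm hne)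
    · intro q hq
      simp only [P2, Finset.mem_filter, Finset.mem_univ, true_and] at hq ⊢
      have hne : τ⁻¹ q.1 ≠ τ⁻¹ q.2 := fun h => hq.ne (τ⁻¹.injective h)
      split
      · assumption
      · exact lt_of_le_of_ne (not_lt.1 (by assumption)) (Ne.symm hne)
    · intro q hq
      simp only [P2, Finset.mem_filter, Finset.mem_univ, true_and] at hq
      rcases lt_or_ge (τ q.1) (τ q.2) with h | h
      · simp [h, Perm.coe_inv, Equiv.symm_apply_apply, hq, hq.not_gt]
      · have hne : τ q.1 ≠ τ q.2 := fun h' => hq.ne (τ.injective h')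
        have h' : τ q.2 < τ q.1 := lt_of_le_of_ne h (Ne.symm hne)
        simp [h'.not_gt, h', Perm.coe_inv, Equiv.symm_apply_apply, hq, hq.not_gt]
    · intro q hq
      simp only [P2, Finset.mem_filter, Finset.mem_univ, true_and] at hq
      rcases lt_or_ge (τ⁻¹ q.1) (τ⁻¹ q.2) with h | h
      · simp only [Perm.coe_inv] at h; simp [h, Perm.coe_inv, Equiv.apply_symm_apply, hq, hq.not_gt]
      · have hne : τ⁻¹ q.1 ≠ τ⁻¹ q.2 := fun h' => hq.ne (τ⁻¹.injective h')
        have h' : τ⁻¹ q.2 < τ⁻¹ q.1 := lt_of_le_of_ne h (Ne.symm hne)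
        simp only [Perm.coe_inv] at h'; simp [h'.not_gt, h', Perm.coe_inv, Equiv.apply_symm_apply, hq, hq.not_gt]
    · intro q _; rfl


variable {M : ℕ}




lemma S_comp (l : Fin (2*M) → ℝ) (τ : Perm (Fin (2*M))) :
    S M l = ((sign τ : ℤ) : ℝ) * S M (l ∘ τ) := by
  rw [S, S, Finset.mul_sum]
  refine Fintype.sum_equiv (Equiv.mulLeft τ) _ _ ?_ |>.symm
  intro ρ
  simp only [Equiv.coe_mulLeft, Perm.mul_apply, Function.comp_apply, map_mul]
  push_cast
  ring

variable {M : ℕ}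



/-- partner of a value -/
def pr {M : ℕ} (k : Fin (2*M)) : Fin (2*M) :=
  ⟨2*((k:ℕ)/2) + (1 - (k:ℕ)%2), by have := k.isLt; omega⟩

lemma pr_pr (k : Fin (2*M)) : pr (pr k) = k := by
  apply Fin.ext; simp only [pr]; omega

lemma pr_ne (k : Fin (2*M)) : pr k ≠ k := by
  intro h
  have := congrArg Fin.val h
  simp only [pr] at this; omega

lemma pr_idx0 (m : Fin M) : pr (idx0 m) = idx1 m := by
  apply Fin.ext; simp only [pr, idx0, idx1]; omega

lemma pr_idx1 (m : Fin M) : pr (idx1 m) = idx0 m := by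
  apply Fin.ext; simp only [pr, idx0, idx1]; omega

/-- the "standard pairing" permutations -/
def P (σ : Perm (Fin (2*M))) : Prop := ∀ m : Fin M, σ (idx1 m) = pr (σ (idx0 m))

instance (σ : Perm (Fin (2*M))) : Decidable (P σ) := by unfold P; infer_instance

def E (M : ℕ) : Fin (2*M) ≃ Fin M × Bool where
  toFun k := (⟨(k:ℕ)/2, by have := k.isLt; omega⟩, decide ((k:ℕ) % 2 = 1))
  invFun p := ⟨2*(p.1:ℕ) + p.2.toNat, by have := p.1.isLt; cases p.2 <;> simp [Bool.toNat] <;> omega⟩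
  left_inv k := by
    apply Fin.ext
    simp only
    by_cases h : (k:ℕ) % 2 = 1 <;> simp [h, Bool.toNat] <;> omega
  right_inv p := by
    obtain ⟨m, b⟩ := p
    apply Prod.ext
    · apply Fin.ext
      cases b <;> (simp [Bool.toNat]; try omega)
    · cases b <;> (simp [Bool.toNat]; try omega)

def e2 (b : Bool) : Perm Bool := if b then Equiv.swap false true else 1

def ψ (c : Perm (Fin M)) (b : Fin M → Bool) : Perm (Fin M × Bool) :=
  Equiv.prodCongrLeft (fun _ : Bool => c) * Equiv.prodCongrRight (fun m => e2 (b m))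

noncomputable def Φ (c : Perm (Fin M)) (b : Fin M → Bool) : Perm (Fin (2*M)) :=
  (E M).symm.permCongr (ψ c b)

lemma e2_false (b : Bool) : e2 b false = b := by cases b <;> simp [e2, Equiv.swap_apply_left]

lemma e2_true (b : Bool) : e2 b true = !b := by cases b <;> simp [e2, Equiv.swap_apply_right]

lemma Φ_apply (c : Perm (Fin M)) (b : Fin M → Bool) (k : Fin (2*M)) :
    Φ c b k = (E M).symm (ψ c b (E M k)) := by
  simp [Φ, Equiv.permCongr_apply]

lemma ψ_apply (c : Perm (Fin M)) (b : Fin M → Bool) (m : Fin M) (r : Bool) :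
    ψ c b (m, r) = (c m, e2 (b m) r) := rfl

lemma E_apply (k : Fin (2*M)) : E M k = (⟨(k:ℕ)/2, by have := k.isLt; omega⟩, decide ((k:ℕ)%2=1)) := rfl

lemma E_idx0 (m : Fin M) : E M (idx0 m) = (m, false) := by
  rw [E_apply]
  apply Prod.ext
  · apply Fin.ext; simp only [idx0]; omega
  · simp only [idx0]; refine decide_eq_false ?_
    omega

lemma E_idx1 (m : Fin M) : E M (idx1 m) = (m, true) := by
  rw [E_apply]
  apply Prod.ext
  · apply Fin.ext; simp only [idx1]; omega
  · simp only [idx1]; refine decide_eq_true ?_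
    omega

lemma Esymm_val (m : Fin M) (r : Bool) : (((E M).symm (m, r)) : ℕ) = 2*(m:ℕ) + r.toNat := rfl

lemma Φ_idx0_val (c : Perm (Fin M)) (b : Fin M → Bool) (m : Fin M) :
    ((Φ c b (idx0 m)) : ℕ) = 2*((c m : ℕ)) + (b m).toNat := by
  rw [Φ_apply, E_idx0, ψ_apply, e2_false, Esymm_val]

lemma Φ_idx1_val (c : Perm (Fin M)) (b : Fin M → Bool) (m : Fin M) :
    ((Φ c b (idx1 m)) : ℕ) = 2*((c m : ℕ)) + (!(b m)).toNat := by
  rw [Φ_apply, E_idx1, ψ_apply, e2_true, Esymm_val]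

lemma P_Φ (c : Perm (Fin M)) (b : Fin M → Bool) : P (Φ c b) := by
  intro m
  apply Fin.ext
  rw [Φ_idx1_val]
  simp only [pr, Φ_idx0_val]
  cases h : b m <;> simp [h, Bool.toNat] <;> omega

lemma sign_Φ (c : Perm (Fin M)) (b : Fin M → Bool) :
    sign (Φ c b) = ∏ m : Fin M, (if b m then (-1 : ℤˣ) else 1) := by
  rw [Φ, sign_permCongr, ψ, map_mul, sign_prodCongrLeft, sign_prodCongrRight]
  have h1 : ∏ _k : Bool, sign c = 1 := by
    rw [Finset.prod_const]
    have : (Finset.univ : Finset Bool).card = 2 := rfl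
    rw [this]
    rcases Int.units_eq_one_or (sign c) with h | h <;> rw [h] <;> norm_num
  rw [h1, one_mul]
  refine Finset.prod_congr rfl fun m _ => ?_
  cases h : b m <;> simp [e2, h, sign_swap]


lemma idx_parity (k : Fin (2*M)) :
    (∃ m : Fin M, k = idx0 m) ∨ (∃ m : Fin M, k = idx1 m) := by
  by_cases h : (k:ℕ) % 2 = 0
  · exact Or.inl ⟨⟨(k:ℕ)/2, by have := k.isLt; omega⟩, by apply Fin.ext; simp [idx0]; omega⟩
  · exact Or.inr ⟨⟨(k:ℕ)/2, by have := k.isLt; omega⟩, by apply Fin.ext; simp [idx1]; omega⟩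

lemma exists_decomp {σ : Perm (Fin (2*M))} (hσ : P σ) : ∃ c b, σ = Φ c b := by
  classical
  have hval : ∀ m : Fin M, ((σ (idx1 m)) : ℕ) = 2*((σ (idx0 m) : ℕ)/2) + (1 - (σ (idx0 m) : ℕ)%2) := by
    intro m
    rw [hσ m]; rfl
  set cf : Fin M → Fin M := fun m => ⟨(σ (idx0 m) : ℕ)/2, by
    have := (σ (idx0 m)).isLt; omega⟩ with hcf
  have hcinj : Function.Injective cf := by
    intro m m' h
    by_contra hne
    have h1 : idx0 m ≠ idx0 m' := fun hh => hne (by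
      have := congrArg Fin.val hh; simp [idx0] at this; exact Fin.ext (by omega))
    have h2 : idx0 m ≠ idx1 m' := fun hh => by
      have := congrArg Fin.val hh; simp [idx0, idx1] at this; omega
    have h3 : idx1 m ≠ idx0 m' := fun hh => by
      have := congrArg Fin.val hh; simp [idx0, idx1] at this; omega
    have h4 : idx1 m ≠ idx1 m' := fun hh => hne (by
      have := congrArg Fin.val hh; simp [idx1] at this; exact Fin.ext (by omega))
    have e1 : σ (idx0 m) ≠ σ (idx0 m') := fun hh => h1 (σ.injective hh)
    have e2 : σ (idx0 m) ≠ σ (idx1 m') := fun hh => h2 (σ.injective hh)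
    have e3 : σ (idx1 m) ≠ σ (idx0 m') := fun hh => h3 (σ.injective hh)
    have e4 : σ (idx1 m) ≠ σ (idx1 m') := fun hh => h4 (σ.injective hh)
    have v1 := Fin.val_ne_of_ne e1
    have v2 := Fin.val_ne_of_ne e2
    have v3 := Fin.val_ne_of_ne e3
    have v4 := Fin.val_ne_of_ne e4
    have hq := congrArg Fin.val h
    simp only [hcf] at hq
    have w1 := hval m
    have w2 := hval m'
    omega
  have hcbij : Function.Bijective cf := Finite.injective_iff_bijective.1 hcinj
  refine ⟨Equiv.ofBijective cf hcbij, fun m => decide ((σ (idx0 m) : ℕ) % 2 = 1), ?_⟩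
  apply Equiv.ext
  intro k
  have hco : ∀ m, (Equiv.ofBijective cf hcbij) m = cf m := fun m => rfl
  have key0 : ∀ m : Fin M, σ (idx0 m) = Φ (Equiv.ofBijective cf hcbij) (fun m => decide ((σ (idx0 m) : ℕ) % 2 = 1)) (idx0 m) := by
    intro m
    apply Fin.ext
    rw [Φ_idx0_val, hco]
    simp only [hcf]
    by_cases h : (σ (idx0 m) : ℕ) % 2 = 1 <;> simp [h, Bool.toNat] <;> omega
  have key1 : ∀ m : Fin M, σ (idx1 m) = Φ (Equiv.ofBijective cf hcbij) (fun m => decide ((σ (idx0 m) : ℕ) % 2 = 1)) (idx1 m) := by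
    intro m
    apply Fin.ext
    rw [Φ_idx1_val, hco]
    simp only [hcf]
    have := hval m
    by_cases h : (σ (idx0 m) : ℕ) % 2 = 1 <;> simp [h, Bool.toNat] <;> omega
  rcases idx_parity k with ⟨m, rfl⟩ | ⟨m, rfl⟩
  · exact key0 m
  · exact key1 m

lemma Φ_injective : Function.Injective (fun p : Perm (Fin M) × (Fin M → Bool) => Φ p.1 p.2) := by
  rintro ⟨c, b⟩ ⟨c', b'⟩ h
  simp only at h
  have hv : ∀ m : Fin M, ((Φ c b (idx0 m)) : ℕ) = ((Φ c' b' (idx0 m)) : ℕ) := by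
    intro m; rw [h]
  have key : ∀ m : Fin M, c m = c' m ∧ b m = b' m := by
    intro m
    have := hv m
    rw [Φ_idx0_val, Φ_idx0_val] at this
    constructor
    · apply Fin.ext
      cases hb : b m <;> cases hb' : b' m <;> rw [hb, hb'] at this <;> simp [Bool.toNat] at this ⊢ <;> omega
    · cases hb : b m <;> cases hb' : b' m <;> rw [hb, hb'] at this <;> simp [Bool.toNat] at this ⊢ <;> omega
  apply Prod.ext
  · exact Equiv.ext fun m => (key m).1
  · exact funext fun m => (key m).2

lemma card_P : ((Finset.univ : Finset (Perm (Fin (2*M)))).filter P).card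
    = 2^M * Nat.factorial M := by
  classical
  have : ((Finset.univ : Finset (Perm (Fin M) × (Fin M → Bool)))).card
      = ((Finset.univ : Finset (Perm (Fin (2*M)))).filter P).card := by
    refine Finset.card_bij (fun p _ => Φ p.1 p.2) ?_ ?_ ?_
    · intro p _
      simp only [Finset.mem_filter, Finset.mem_univ, true_and]
      exact P_Φ p.1 p.2
    · intro p _ q _ h
      exact Φ_injective h
    · intro σ hσ
      simp only [Finset.mem_filter, Finset.mem_univ, true_and] at hσ
      obtain ⟨c, b, rfl⟩ := exists_decomp hσ
      exact ⟨(c, b), Finset.mem_univ _, rfl⟩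
  rw [← this]
  simp [Fintype.card_perm, mul_comm]




lemma t_eq_one {l : Fin (2*M) → ℝ} (hl : StrictMono l) {σ : Perm (Fin (2*M))} (hσ : P σ) :
    ((sign σ : ℤ) : ℝ) * ∏ m : Fin M, Real.sign (l (σ (idx1 m)) - l (σ (idx0 m))) = 1 := by
  obtain ⟨c, b, rfl⟩ := exists_decomp hσ
  have hsgn : ((sign (Φ c b) : ℤ) : ℝ) = ∏ m : Fin M, (if b m then (-1:ℝ) else 1) := by
    rw [sign_Φ]
    push_cast
    exact Finset.prod_congr rfl fun m _ => by split <;> norm_num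
  have hprd : ∏ m : Fin M, Real.sign (l (Φ c b (idx1 m)) - l (Φ c b (idx0 m)))
      = ∏ m : Fin M, (if b m then (-1:ℝ) else 1) := by
    refine Finset.prod_congr rfl fun m _ => ?_
    cases hb : b m
    · rw [if_neg (by simp)]
      have hlt : Φ c b (idx0 m) < Φ c b (idx1 m) := by
        rw [Fin.lt_def, Φ_idx0_val, Φ_idx1_val, hb]; simp [Bool.toNat]
      exact sign_strictMono hl hlt
    · rw [if_pos rfl]
      have hlt : Φ c b (idx1 m) < Φ c b (idx0 m) := by
        rw [Fin.lt_def, Φ_idx0_val, Φ_idx1_val, hb]; simp [Bool.toNat]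
      exact sign_strictMono' hl hlt
  rw [hsgn, hprd, ← Finset.prod_mul_distrib]
  exact Finset.prod_eq_one fun m _ => by split <;> norm_num

lemma good_sum {l : Fin (2*M) → ℝ} (hl : StrictMono l) :
    ∑ σ ∈ (Finset.univ : Finset (Perm (Fin (2*M)))).filter P,
      (((sign σ : ℤ) : ℝ) * ∏ m : Fin M, Real.sign (l (σ (idx1 m)) - l (σ (idx0 m))))
      = 2^M * Nat.factorial M := by
  rw [Finset.sum_congr rfl (fun σ hσ => t_eq_one hl (Finset.mem_filter.1 hσ).2)]
  rw [Finset.sum_const, card_P]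
  simp [nsmul_eq_mul]


/-- value-partner under σ -/
def pV (σ : Perm (Fin (2*M))) (k : Fin (2*M)) : Fin (2*M) := σ (pr (σ⁻¹ k))

lemma pr_val (k : Fin (2*M)) : ((pr k):ℕ) = 2*((k:ℕ)/2) + (1 - (k:ℕ)%2) := rfl

lemma pV_pV (σ : Perm (Fin (2*M))) (k : Fin (2*M)) : pV σ (pV σ k) = k := by
  simp [pV, Perm.coe_inv, Equiv.symm_apply_apply, pr_pr]

lemma pV_ne (σ : Perm (Fin (2*M))) (k : Fin (2*M)) : pV σ k ≠ k := by
  intro h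
  have h1 : pr (σ⁻¹ k) = σ⁻¹ k := σ.injective (by simpa [pV, Perm.coe_inv, Equiv.apply_symm_apply] using h)
  exact pr_ne _ h1

lemma P_iff (σ : Perm (Fin (2*M))) : P σ ↔ ∀ k, pV σ k = pr k := by
  constructor
  · intro hσ k
    rcases idx_parity (σ⁻¹ k) with ⟨m, hm⟩ | ⟨m, hm⟩
    · have hk : k = σ (idx0 m) := by rw [← hm, Perm.coe_inv, Equiv.apply_symm_apply]
      rw [hk]
      simp only [pV, Perm.coe_inv, Equiv.symm_apply_apply, pr_idx0]
      exact hσ m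
    · have hk : k = σ (idx1 m) := by rw [← hm, Perm.coe_inv, Equiv.apply_symm_apply]
      rw [hk]
      simp only [pV, Perm.coe_inv, Equiv.symm_apply_apply, pr_idx1]
      rw [hσ m, pr_pr]
  · intro h m
    have := h (σ (idx0 m))
    simpa [pV, Perm.coe_inv, Equiv.symm_apply_apply, pr_idx0] using this

/-- the set of badly paired values -/
def badset (σ : Perm (Fin (2*M))) : Finset (Fin (2*M)) :=
  Finset.univ.filter (fun k => pV σ k ≠ pr k)

lemma badset_nonempty {σ : Perm (Fin (2*M))} (h : ¬ P σ) : (badset σ).Nonempty := by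
  rw [P_iff] at h
  push_neg at h
  obtain ⟨k, hk⟩ := h
  exact ⟨k, Finset.mem_filter.2 ⟨Finset.mem_univ _, hk⟩⟩

noncomputable def vOf (σ : Perm (Fin (2*M))) (h : ¬ P σ) : Fin (2*M) :=
  (badset σ).min' (badset_nonempty h)

noncomputable def ι (σ : Perm (Fin (2*M))) (h : ¬ P σ) : Perm (Fin (2*M)) :=
  Equiv.swap (pV σ (vOf σ h)) (pV σ (pr (vOf σ h))) * σ

lemma vOf_bad (σ : Perm (Fin (2*M))) (h : ¬ P σ) : pV σ (vOf σ h) ≠ pr (vOf σ h) :=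
  (Finset.mem_filter.1 ((badset σ).min'_mem (badset_nonempty h))).2

lemma vOf_min (σ : Perm (Fin (2*M))) (h : ¬ P σ) {k : Fin (2*M)}
    (hk : pV σ k ≠ pr k) : vOf σ h ≤ k :=
  (badset σ).min'_le k (Finset.mem_filter.2 ⟨Finset.mem_univ _, hk⟩)

lemma pV_swap_mul (σ : Perm (Fin (2*M))) (a b k : Fin (2*M)) :
    pV (Equiv.swap a b * σ) k = Equiv.swap a b (pV σ (Equiv.swap a b k)) := by
  simp only [pV, mul_inv_rev, Equiv.swap_inv, Perm.mul_apply]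

lemma pr_vOf_val (σ : Perm (Fin (2*M))) (h : ¬ P σ) :
    ((pr (vOf σ h)) : ℕ) = (vOf σ h : ℕ) + 1 := by
  set v := vOf σ h with hv
  by_contra hc
  rw [pr_val] at hc
  have hmod : (v:ℕ) % 2 = 1 := by omega
  have hlt : pr v < v := by
    rw [Fin.lt_def, pr_val]; omega
  have hng : ¬ (pV σ (pr v) ≠ pr (pr v)) := by
    intro hb
    exact absurd (vOf_min σ h hb) (not_le.2 hlt)
  push_neg at hng
  rw [pr_pr] at hng
  have : pV σ v = pr v := by
    conv_lhs => rw [← hng]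
    rw [pV_pV]
  exact vOf_bad σ h this

lemma vOf_lt_w (σ : Perm (Fin (2*M))) (h : ¬ P σ) :
    (vOf σ h : ℕ) + 2 ≤ (pV σ (vOf σ h) : ℕ) := by
  have hwbad : pV σ (pV σ (vOf σ h)) ≠ pr (pV σ (vOf σ h)) := by
    rw [pV_pV]
    intro hc
    apply vOf_bad σ h
    conv_rhs => rw [hc, pr_pr]
  have h1 : (vOf σ h : ℕ) ≤ (pV σ (vOf σ h) : ℕ) := Fin.le_def.1 (vOf_min σ h hwbad)
  have h2 : (pV σ (vOf σ h) : ℕ) ≠ (vOf σ h : ℕ) := Fin.val_ne_of_ne (pV_ne σ _)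
  have h3 : (pV σ (vOf σ h) : ℕ) ≠ ((pr (vOf σ h)) : ℕ) := Fin.val_ne_of_ne (vOf_bad σ h)
  have h4 := pr_vOf_val σ h
  omega

lemma vOf_lt_x (σ : Perm (Fin (2*M))) (h : ¬ P σ) :
    (vOf σ h : ℕ) + 2 ≤ (pV σ (pr (vOf σ h)) : ℕ) := by
  have hxv : pV σ (pr (vOf σ h)) ≠ vOf σ h := by
    intro hc
    apply vOf_bad σ h
    conv_lhs => rw [← hc, pV_pV]
  have hxbad : pV σ (pV σ (pr (vOf σ h))) ≠ pr (pV σ (pr (vOf σ h))) := by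
    rw [pV_pV]
    intro hc
    have h5 := congrArg pr hc
    rw [pr_pr, pr_pr] at h5
    exact hxv h5.symm
  have h1 : (vOf σ h : ℕ) ≤ (pV σ (pr (vOf σ h)) : ℕ) := Fin.le_def.1 (vOf_min σ h hxbad)
  have h2 : (pV σ (pr (vOf σ h)) : ℕ) ≠ ((pr (vOf σ h)) : ℕ) := Fin.val_ne_of_ne (pV_ne σ _)
  have h3 : (pV σ (pr (vOf σ h)) : ℕ) ≠ (vOf σ h : ℕ) := Fin.val_ne_of_ne hxv
  have h4 := pr_vOf_val σ h
  omega

lemma w_ne_x (σ : Perm (Fin (2*M))) (h : ¬ P σ) :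
    pV σ (vOf σ h) ≠ pV σ (pr (vOf σ h)) := by
  intro hc
  have h5 := congrArg (pV σ) hc
  rw [pV_pV, pV_pV] at h5
  exact pr_ne (vOf σ h) h5.symm


lemma swap_fix_of_ne {a b k : Fin (2*M)} (h1 : k ≠ a) (h2 : k ≠ b) :
    Equiv.swap a b k = k := Equiv.swap_apply_of_ne_of_ne h1 h2

lemma v_ne_w (σ : Perm (Fin (2*M))) (h : ¬ P σ) : vOf σ h ≠ pV σ (vOf σ h) := by
  have := vOf_lt_w σ h
  intro hc; rw [← hc] at this; omega

lemma v_ne_x (σ : Perm (Fin (2*M))) (h : ¬ P σ) : vOf σ h ≠ pV σ (pr (vOf σ h)) := by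
  have := vOf_lt_x σ h
  intro hc; rw [← hc] at this; omega

lemma prv_ne_w (σ : Perm (Fin (2*M))) (h : ¬ P σ) : pr (vOf σ h) ≠ pV σ (vOf σ h) := by
  have h1 := vOf_lt_w σ h
  have h2 := pr_vOf_val σ h
  intro hc
  have := congrArg Fin.val hc
  omega

lemma prv_ne_x (σ : Perm (Fin (2*M))) (h : ¬ P σ) : pr (vOf σ h) ≠ pV σ (pr (vOf σ h)) := by
  have h1 := vOf_lt_x σ h
  have h2 := pr_vOf_val σ h
  intro hc
  have := congrArg Fin.val hc
  omega

lemma pV_ι_v (σ : Perm (Fin (2*M))) (h : ¬ P σ) :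
    pV (ι σ h) (vOf σ h) = pV σ (pr (vOf σ h)) := by
  rw [ι, pV_swap_mul, swap_fix_of_ne (v_ne_w σ h) (v_ne_x σ h), Equiv.swap_apply_left]

lemma pV_ι_prv (σ : Perm (Fin (2*M))) (h : ¬ P σ) :
    pV (ι σ h) (pr (vOf σ h)) = pV σ (vOf σ h) := by
  rw [ι, pV_swap_mul, swap_fix_of_ne (prv_ne_w σ h) (prv_ne_x σ h), Equiv.swap_apply_right]

lemma pV_ι_lt (σ : Perm (Fin (2*M))) (h : ¬ P σ) {k : Fin (2*M)} (hk : k < vOf σ h) :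
    pV (ι σ h) k = pr k := by
  have hw := vOf_lt_w σ h
  have hx := vOf_lt_x σ h
  have hkv : (k:ℕ) < (vOf σ h : ℕ) := hk
  have hk1 : k ≠ pV σ (vOf σ h) := by
    intro hc; have := congrArg Fin.val hc; omega
  have hk2 : k ≠ pV σ (pr (vOf σ h)) := by
    intro hc; have := congrArg Fin.val hc; omega
  have hgood : pV σ k = pr k := by
    by_contra hb
    exact absurd (Fin.le_def.1 (vOf_min σ h hb)) (by omega)
  have hpr1 : pr k ≠ pV σ (vOf σ h) := by
    intro hc; have := congrArg Fin.val hc; rw [pr_val] at this; omega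
  have hpr2 : pr k ≠ pV σ (pr (vOf σ h)) := by
    intro hc; have := congrArg Fin.val hc; rw [pr_val] at this; omega
  rw [ι, pV_swap_mul, swap_fix_of_ne hk1 hk2, hgood, swap_fix_of_ne hpr1 hpr2]

lemma ι_bad_v (σ : Perm (Fin (2*M))) (h : ¬ P σ) :
    pV (ι σ h) (vOf σ h) ≠ pr (vOf σ h) := by
  rw [pV_ι_v]
  exact (prv_ne_x σ h).symm

lemma not_P_ι (σ : Perm (Fin (2*M))) (h : ¬ P σ) : ¬ P (ι σ h) := by
  intro hP
  exact ι_bad_v σ h ((P_iff _).1 hP _)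

lemma vOf_ι (σ : Perm (Fin (2*M))) (h : ¬ P σ) : vOf (ι σ h) (not_P_ι σ h) = vOf σ h := by
  apply le_antisymm
  · exact vOf_min _ _ (ι_bad_v σ h)
  · apply Finset.le_min'
    intro k hk
    by_contra hc
    push_neg at hc
    rw [badset, Finset.mem_filter] at hk
    exact hk.2 (pV_ι_lt σ h hc)

lemma ι_ι (σ : Perm (Fin (2*M))) (h : ¬ P σ) : ι (ι σ h) (not_P_ι σ h) = σ := by
  show Equiv.swap (pV (ι σ h) (vOf (ι σ h) (not_P_ι σ h))) (pV (ι σ h) (pr (vOf (ι σ h) (not_P_ι σ h)))) * (ι σ h) = σ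
  rw [vOf_ι, pV_ι_v, pV_ι_prv]
  conv_lhs => rw [ι]
  rw [← mul_assoc, Equiv.swap_comm, Equiv.swap_mul_self, one_mul]

lemma ι_ne (σ : Perm (Fin (2*M))) (h : ¬ P σ) : ι σ h ≠ σ := by
  intro hc
  rw [ι] at hc
  have h1 : Equiv.swap (pV σ (vOf σ h)) (pV σ (pr (vOf σ h))) = 1 := by
    have h2 := congrArg (· * σ⁻¹) hc
    simpa [mul_assoc] using h2
  have h3 := congrArg (fun e : Perm (Fin (2*M)) => e (pV σ (vOf σ h))) h1
  simp only [Equiv.swap_apply_left, Perm.one_apply] at h3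
  exact w_ne_x σ h h3.symm


lemma term_flip {l : Fin (2*M) → ℝ} (hl : StrictMono l) (σ : Perm (Fin (2*M))) (h : ¬ P σ) :
    ((sign (ι σ h) : ℤ) : ℝ) * ∏ m : Fin M, Real.sign (l ((ι σ h) (idx1 m)) - l ((ι σ h) (idx0 m)))
    = -(((sign σ : ℤ) : ℝ) * ∏ m : Fin M, Real.sign (l (σ (idx1 m)) - l (σ (idx0 m)))) := by
  have hvw : vOf σ h < pV σ (vOf σ h) := by
    rw [Fin.lt_def]; have := vOf_lt_w σ h; omega
  have hvx : vOf σ h < pV σ (pr (vOf σ h)) := by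
    rw [Fin.lt_def]; have := vOf_lt_x σ h; omega
  have hprvw : pr (vOf σ h) < pV σ (vOf σ h) := by
    rw [Fin.lt_def, pr_vOf_val σ h]; have := vOf_lt_w σ h; omega
  have hprvx : pr (vOf σ h) < pV σ (pr (vOf σ h)) := by
    rw [Fin.lt_def, pr_vOf_val σ h]; have := vOf_lt_x σ h; omega
  have hsgn : ((sign (ι σ h) : ℤ) : ℝ) = -((sign σ : ℤ) : ℝ) := by
    rw [ι, Perm.sign_mul, sign_swap (w_ne_x σ h)]
    push_cast
    ring
  have hprd : ∏ m : Fin M, Real.sign (l ((ι σ h) (idx1 m)) - l ((ι σ h) (idx0 m)))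
      = ∏ m : Fin M, Real.sign (l (σ (idx1 m)) - l (σ (idx0 m))) := by
    refine Finset.prod_congr rfl fun m _ => ?_
    simp only [ι, Perm.mul_apply]
    have hba : pV σ (σ (idx0 m)) = σ (idx1 m) := by
      simp [pV, Perm.coe_inv, Equiv.symm_apply_apply, pr_idx0]
    have hab : pV σ (σ (idx1 m)) = σ (idx0 m) := by
      rw [← hba, pV_pV]
    by_cases ha1 : σ (idx0 m) = pV σ (vOf σ h)
    · have hbv : σ (idx1 m) = vOf σ h := by
        rw [← hba, ha1, pV_pV]
      rw [ha1, hbv, swap_fix_of_ne (v_ne_w σ h) (v_ne_x σ h), Equiv.swap_apply_left,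
        sign_strictMono' hl hvx, sign_strictMono' hl hvw]
    by_cases ha2 : σ (idx0 m) = pV σ (pr (vOf σ h))
    · have hbv : σ (idx1 m) = pr (vOf σ h) := by
        rw [← hba, ha2, pV_pV]
      rw [ha2, hbv, swap_fix_of_ne (prv_ne_w σ h) (prv_ne_x σ h), Equiv.swap_apply_right,
        sign_strictMono' hl hprvw, sign_strictMono' hl hprvx]
    by_cases hb1 : σ (idx1 m) = pV σ (vOf σ h)
    · have hav : σ (idx0 m) = vOf σ h := by
        rw [← hab, hb1, pV_pV]
      rw [hav, hb1, swap_fix_of_ne (v_ne_w σ h) (v_ne_x σ h), Equiv.swap_apply_left,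
        sign_strictMono hl hvx, sign_strictMono hl hvw]
    by_cases hb2 : σ (idx1 m) = pV σ (pr (vOf σ h))
    · have hav : σ (idx0 m) = pr (vOf σ h) := by
        rw [← hab, hb2, pV_pV]
      rw [hav, hb2, swap_fix_of_ne (prv_ne_w σ h) (prv_ne_x σ h), Equiv.swap_apply_right,
        sign_strictMono hl hprvw, sign_strictMono hl hprvx]
    rw [swap_fix_of_ne ha1 ha2, swap_fix_of_ne hb1 hb2]
  rw [hsgn, hprd]
  ring


lemma bad_sum {l : Fin (2*M) → ℝ} (hl : StrictMono l) :
    ∑ σ ∈ (Finset.univ : Finset (Perm (Fin (2*M)))).filter (fun σ => ¬ P σ),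
      (((sign σ : ℤ) : ℝ) * ∏ m : Fin M, Real.sign (l (σ (idx1 m)) - l (σ (idx0 m)))) = 0 := by
  refine Finset.sum_involution (fun σ hσ => ι σ ((Finset.mem_filter.1 hσ).2)) ?_ ?_ ?_ ?_
  · intro σ hσ
    rw [term_flip hl σ ((Finset.mem_filter.1 hσ).2)]
    ring
  · intro σ hσ _
    exact ι_ne σ _
  · intro σ hσ
    exact Finset.mem_filter.2 ⟨Finset.mem_univ _, not_P_ι σ _⟩
  · intro σ hσ
    exact ι_ι σ _

lemma S_sorted {l : Fin (2*M) → ℝ} (hl : StrictMono l) :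
    S M l = 2^M * Nat.factorial M := by
  rw [S, ← Finset.sum_filter_add_sum_filter_not Finset.univ P
    (fun σ => ((sign σ : ℤ) : ℝ) * ∏ m : Fin M, Real.sign (l (σ (idx1 m)) - l (σ (idx0 m))))]
  rw [good_sum hl, bad_sum hl, add_zero]


end PfProof

/-- For `N = 2M` real numbers `λ_1, …, λ_N`,
`Pf [sgn(λ_n - λ_m)]_{m,n} = ∏_{m<n} sgn(λ_n - λ_m)`. -/
theorem stmt1 (M : ℕ) (l : Fin (2*M) → ℝ) :
    pf (Matrix.of fun m n : Fin (2*M) => Real.sign (l n - l m)) =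
      ∏ q ∈ Finset.univ.filter (fun q : Fin (2*M) × Fin (2*M) => q.1 < q.2),
        Real.sign (l q.2 - l q.1) := by
  classical
  open PfProof in
  have hpf : pf (Matrix.of fun m n : Fin (2*M) => Real.sign (l n - l m))
      = (1 / (2^M * (Nat.factorial M) : ℝ)) * S M l := rfl
  show _ = ∏ q ∈ PfProof.P2 (2*M), Real.sign (l q.2 - l q.1)
  by_cases hinj : Function.Injective l
  · set τ := Tuple.sort l with hτ
    have hsm : StrictMono (l ∘ τ) :=
      (Tuple.monotone_sort l).strictMono_of_injective (hinj.comp τ.injective)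
    have h1 : PfProof.S M l = ((Equiv.Perm.sign τ : ℤ) : ℝ) * PfProof.S M (l ∘ τ) :=
      PfProof.S_comp l τ
    have h2 : PfProof.S M (l ∘ τ) = 2^M * Nat.factorial M := PfProof.S_sorted hsm
    have h3 : ∏ q ∈ PfProof.P2 (2*M), Real.sign (l (τ q.2) - l (τ q.1)) = 1 := by
      refine Finset.prod_eq_one fun q hq => ?_
      have hlt : q.1 < q.2 := (Finset.mem_filter.1 hq).2
      exact PfProof.sign_strictMono hsm hlt
    have h6 : ((Equiv.Perm.sign τ : ℤ) : ℝ)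
        * ∏ q ∈ PfProof.P2 (2*M), Real.sign (l q.2 - l q.1) = 1 := by
      rw [← PfProof.prod_sign_comp l τ, h3]
    have h5 : ∏ q ∈ PfProof.P2 (2*M), Real.sign (l q.2 - l q.1)
        = ((Equiv.Perm.sign τ : ℤ) : ℝ) := by
      have h7 := congrArg (fun z => ((Equiv.Perm.sign τ : ℤ) : ℝ) * z) h6
      simp only [← mul_assoc, PfProof.sign_sq τ, one_mul, mul_one] at h7
      exact h7
    have hC : (2^M * (Nat.factorial M) : ℝ) ≠ 0 := by positivity
    rw [hpf, h1, h2, h5]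
    field_simp
  · rw [hpf, PfProof.S_noninj hinj, mul_zero]
    exact (PfProof.prod_noninj hinj).symm
end

section
/- Let $N = 2M$ and let $\lambda_1, \ldots, \lambda_N$ be distinct real numbers. Define the antisymmetric matrix $\mathbf{S}(\boldsymbol\lambda) = \left[\frac{(\lambda_n^M - \lambda_m^M)^2}{\lambda_n - \lambda_m}\right]_{m,n=1}^N$ (with diagonal entries $0$). Then $\mathrm{Pf}\,\mathbf{S}(\boldsymbol\lambda) = \prod_{m<n}(\lambda_n - \lambda_m)$. -/
open Equiv Finset Function Matrix

section PfaffianAux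

variable {M : ℕ}

def pA {M : ℕ} (m : Fin M) : Fin (2*M) := ⟨2*(m:ℕ), by have := m.isLt; omega⟩
def pB {M : ℕ} (m : Fin M) : Fin (2*M) := ⟨2*(m:ℕ)+1, by have := m.isLt; omega⟩
lemma prod_range_double {β : Type*} [CommMonoid β] (M : ℕ) (F : ℕ → β) :
    ∏ i ∈ range (2*M), F i = ∏ m ∈ range M, (F (2*m) * F (2*m+1)) := by
  induction M with
  | zero => simp
  | succ M ih =>
      have h2 : 2*(M+1) = (2*M+1)+1 := by omega
      rw [h2, prod_range_succ, prod_range_succ, ih, prod_range_succ]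
      ring_nf
      rw [mul_assoc]

lemma prod_fin_double {M : ℕ} (G : Fin (2*M) → ℝ) :
    ∏ i : Fin (2*M), G i = ∏ m : Fin M, (G (pA m) * G (pB m)) := by
  classical
  set F : ℕ → ℝ := fun n => if h : n < 2*M then G ⟨n, h⟩ else 1 with hF
  have h1 : ∏ i : Fin (2*M), G i = ∏ i ∈ range (2*M), F i := by
    rw [← Fin.prod_univ_eq_prod_range]
    apply Finset.prod_congr rfl
    intro i _
    simp only [hF, i.isLt, dif_pos]
  have h2 : ∏ m : Fin M, (G (pA m) * G (pB m)) = ∏ m ∈ range M, (F (2*m) * F (2*m+1)) := by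
    rw [← Fin.prod_univ_eq_prod_range]
    apply Finset.prod_congr rfl
    intro m _
    have hm := m.isLt
    simp only [hF]
    rw [dif_pos (by omega : 2*(m:ℕ) < 2*M), dif_pos (by omega : 2*(m:ℕ)+1 < 2*M)]
    rfl
  rw [h1, h2, prod_range_double]

def pairEquiv (M : ℕ) (α : Type*) : (Fin (2*M) → α) ≃ (Fin M → α × α) where
  toFun h m := (h (pA m), h (pB m))
  invFun g i := if (i:ℕ) % 2 = 0 then (g ⟨(i:ℕ)/2, by have := i.isLt; omega⟩).1
                else (g ⟨(i:ℕ)/2, by have := i.isLt; omega⟩).2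
  left_inv h := by
    funext i
    rcases Nat.even_or_odd (i:ℕ) with he | ho
    · have h0 : (i:ℕ) % 2 = 0 := Nat.even_iff.mp he
      simp only [h0, if_pos]
      exact congrArg h (Fin.ext (by simp [pA]; omega))
    · have h1 : ¬ ((i:ℕ) % 2 = 0) := by have := Nat.odd_iff.mp ho; omega
      simp only [h1, if_neg, ite_false]
      exact congrArg h (Fin.ext (by simp [pB]; have := Nat.odd_iff.mp ho; omega))
  right_inv g := by
    funext m
    have hm := m.isLt
    have e1 : (2*(m:ℕ)) % 2 = 0 := by omega
    have e2 : ¬ ((2*(m:ℕ)+1) % 2 = 0) := by omega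
    ext
    · simp only [pA, e1, if_pos]
      exact congrArg (fun x => (g x).1) (Fin.ext (by simp only []; omega))
    · simp only [pB]
      simp only [e2, ↓reduceIte]
      exact congrArg (fun x => (g x).2) (Fin.ext (by simp only []; omega))

lemma pairEquiv_fst {M : ℕ} {α : Type*} (h : Fin (2*M) → α) (m : Fin M) :
    (pairEquiv M α h m).1 = h (pA m) := rfl
lemma pairEquiv_snd {M : ℕ} {α : Type*} (h : Fin (2*M) → α) (m : Fin M) :
    (pairEquiv M α h m).2 = h (pB m) := rfl

noncomputable def pfSum {M : ℕ} (A : Matrix (Fin (2*M)) (Fin (2*M)) ℝ) : ℝ :=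
  ∑ σ : Perm (Fin (2*M)), ((Equiv.Perm.sign σ : ℤ) : ℝ) * ∏ m : Fin M, A (σ (pA m)) (σ (pB m))

lemma pfSum_conj {M : ℕ} (A B : Matrix (Fin (2*M)) (Fin (2*M)) ℝ) :
    pfSum (B * A * Bᵀ) = B.det * pfSum A := by
  classical
  have hentry : ∀ x y, (B * A * Bᵀ) x y
      = ∑ p : Fin (2*M) × Fin (2*M), B x p.1 * A p.1 p.2 * B y p.2 := by
    intro x y
    rw [Fintype.sum_prod_type]
    simp only [Matrix.mul_apply, Matrix.transpose_apply, Finset.sum_mul]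
    rw [Finset.sum_comm]
  calc pfSum (B * A * Bᵀ)
      = ∑ σ : Perm (Fin (2*M)), ∑ h : Fin (2*M) → Fin (2*M),
          ((Equiv.Perm.sign σ : ℤ) : ℝ) *
          ∏ m : Fin M, (B (σ (pA m)) (h (pA m)) * A (h (pA m)) (h (pB m)) *
            B (σ (pB m)) (h (pB m))) := by
        unfold pfSum
        refine Finset.sum_congr rfl fun σ _ => ?_
        simp only [hentry]
        rw [Finset.prod_univ_sum (fun _ => (univ : Finset (Fin (2*M) × Fin (2*M))))
          (fun m p => B (σ (pA m)) p.1 * A p.1 p.2 * B (σ (pB m)) p.2), Fintype.piFinset_univ,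
          Finset.mul_sum]
        rw [← Equiv.sum_comp (pairEquiv M (Fin (2*M)))
          (fun g => ((Equiv.Perm.sign σ : ℤ) : ℝ) *
            ∏ m : Fin M, (B (σ (pA m)) (g m).1 * A (g m).1 (g m).2 * B (σ (pB m)) (g m).2))]
        exact Finset.sum_congr rfl fun h _ => by
          simp only [pairEquiv_fst, pairEquiv_snd]
    _ = ∑ h : Fin (2*M) → Fin (2*M), (∏ m : Fin M, A (h (pA m)) (h (pB m))) *
          (B.submatrix id h).det := by
        rw [Finset.sum_comm]
        refine Finset.sum_congr rfl fun h _ => ?_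
        rw [Matrix.det_apply', Finset.mul_sum]
        refine Finset.sum_congr rfl fun σ _ => ?_
        have : ∏ i : Fin (2*M), (B.submatrix id h) (σ i) i
            = ∏ m : Fin M, (B (σ (pA m)) (h (pA m)) * B (σ (pB m)) (h (pB m))) := by
          rw [prod_fin_double (fun i => (B.submatrix id h) (σ i) i)]
          rfl
        have h2 : ∏ m : Fin M, (B (σ (pA m)) (h (pA m)) * A (h (pA m)) (h (pB m)) *
            B (σ (pB m)) (h (pB m)))
            = (∏ m : Fin M, A (h (pA m)) (h (pB m))) *
              ∏ m : Fin M, (B (σ (pA m)) (h (pA m)) * B (σ (pB m)) (h (pB m))) := by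
          rw [← Finset.prod_mul_distrib]
          exact Finset.prod_congr rfl fun m _ => by ring
        rw [this, h2]
        ring
    _ = ∑ h : Fin (2*M) → Fin (2*M) with Function.Injective h,
          (∏ m : Fin M, A (h (pA m)) (h (pB m))) * (B.submatrix id h).det := by
        refine (Finset.sum_subset (filter_subset _ _) fun h _ hinj => ?_).symm
        have hni : ¬ Function.Injective h := by simpa using hinj
        obtain ⟨i, j, hij, hne⟩ : ∃ i j, h i = h j ∧ i ≠ j := by
          rw [Injective] at hni; push_neg at hni; exact hni
        have : (B.submatrix id h).det = 0 :=
          Matrix.det_zero_of_column_eq hne fun k => by simp [Matrix.submatrix_apply, hij]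
        rw [this, mul_zero]
    _ = ∑ τ : Perm (Fin (2*M)),
          (∏ m : Fin M, A (τ (pA m)) (τ (pB m))) * (B.submatrix id ⇑τ).det := by
        refine (Finset.sum_bij (fun p h => Equiv.ofBijective p
          ((Finite.injective_iff_bijective).mp (mem_filter.1 h).2))
          (fun _ _ => mem_univ _) (fun _ _ _ _ h => by injection h)
          (fun b _ => ⟨b, mem_filter.2 ⟨mem_univ _, b.injective⟩, coe_fn_injective rfl⟩)
          fun _ _ => rfl)
    _ = B.det * pfSum A := by
        unfold pfSum
        rw [Finset.mul_sum]
        refine Finset.sum_congr rfl fun τ _ => ?_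
        rw [Matrix.det_permute']
        ring

lemma revPerm_succ (n : ℕ) :
    (Fin.revPerm : Perm (Fin (n+1))) = finRotate (n+1) *
      (((finSuccEquiv' (Fin.last n)).symm).permCongr
        (Equiv.optionCongr (Fin.revPerm : Perm (Fin n)))) := by
  ext i
  refine Fin.lastCases ?_ (fun j => ?_) i
  · simp only [Perm.mul_apply, Equiv.permCongr_apply, Equiv.symm_symm, finSuccEquiv'_at,
      Equiv.optionCongr_apply, Option.map_none, finSuccEquiv'_symm_none]
    simp [Fin.ext_iff, Fin.val_rev]
  · have hlt : Fin.castSucc j < Fin.last n := Fin.castSucc_lt_last j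
    simp only [Perm.mul_apply, Equiv.permCongr_apply, Equiv.symm_symm,
      finSuccEquiv'_below hlt, Equiv.optionCongr_apply, Option.map_some]
    have hlt2 : Fin.castSucc (Fin.rev j) < Fin.last n := Fin.castSucc_lt_last _
    rw [show (Fin.revPerm j) = Fin.rev j from rfl, finSuccEquiv'_symm_some_below hlt2]
    have hne : Fin.castSucc (Fin.rev j) ≠ Fin.last n := ne_of_lt hlt2
    have hj := j.isLt
    rw [coe_finRotate, if_neg hne]
    simp [Fin.val_rev]
    omega

lemma sign_revPerm (n : ℕ) : Perm.sign (Fin.revPerm : Perm (Fin n)) = (-1)^(n/2) := by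
  induction n with
  | zero =>
      have : (Fin.revPerm : Perm (Fin 0)) = 1 := Subsingleton.elim _ _
      simp [this]
  | succ n ih =>
      rw [revPerm_succ, _root_.map_mul, sign_finRotate, Perm.sign_permCongr,
        Equiv.optionCongr_sign, ih]
      rcases Nat.even_or_odd n with ⟨t, ht⟩ | ⟨t, ht⟩
      · subst ht
        have e1 : (t+t)/2 = t := by omega
        have e2 : (t+t+1)/2 = t := by omega
        rw [e1, e2]
        have : ((-1:ℤˣ))^(t+t) = 1 := by
          rw [pow_add]; simp [← pow_mul]
        rw [Nat.add_sub_cancel, this, one_mul]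
      · subst ht
        have e1 : (2*t+1)/2 = t := by omega
        have e2 : (2*t+1+1)/2 = t+1 := by omega
        rw [e1, e2, Nat.add_sub_cancel, pow_add, pow_mul]
        norm_num
        rw [pow_succ]
        norm_num

noncomputable def A0 (M : ℕ) : Matrix (Fin (2*M)) (Fin (2*M)) ℝ :=
  Matrix.of fun i j => if (i:ℕ) + (j:ℕ) = 2*M - 1 then (if (i:ℕ) < M then 1 else -1) else 0

lemma smat_eq {M : ℕ} (l : Fin (2*M) → ℝ) (hl : Function.Injective l) :
    (Matrix.of fun m n : Fin (2*M) =>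
        if m = n then 0 else (l n ^ M - l m ^ M)^2 / (l n - l m))
      = vandermonde l * A0 M * (vandermonde l)ᵀ := by
  ext m n
  set x := l m with hx
  set y := l n with hy
  have key : (vandermonde l * A0 M * (vandermonde l)ᵀ) m n
      = (y ^ M - x ^ M) * ∑ k ∈ range M, y ^ k * x ^ (M - 1 - k) := by
    have h1 : ∀ j : Fin (2*M), (vandermonde l * A0 M) m j
        = (if (2*M - 1 - (j:ℕ)) < M then 1 else -1) * x ^ (2*M - 1 - (j:ℕ)) := by
      intro j
      have hj := j.isLt
      rw [Matrix.mul_apply]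
      rw [Finset.sum_eq_single (⟨2*M - 1 - (j:ℕ), by omega⟩ : Fin (2*M))]
      · simp only [vandermonde, A0, Matrix.of_apply]
        rw [if_pos (by omega)]
        ring
      · intro i _ hne
        simp only [vandermonde, A0, Matrix.of_apply]
        rw [if_neg]
        · ring
        · intro hcon
          refine hne (Fin.ext ?_)
          show (i:ℕ) = 2*M-1-(j:ℕ)
          omega
      · intro hmem
        exact absurd (mem_univ _) hmem
    rw [Matrix.mul_apply]
    have h2 : ∀ j : Fin (2*M), (vandermonde l * A0 M) m j * (vandermonde l)ᵀ j n
        = (if (2*M - 1 - (j:ℕ)) < M then 1 else -1) * x ^ (2*M - 1 - (j:ℕ)) * y ^ (j:ℕ) := by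
      intro j
      rw [h1, Matrix.transpose_apply]
      simp only [vandermonde, Matrix.of_apply]
      rfl
    simp only [h2]
    rw [Fin.sum_univ_eq_sum_range
      (fun j => (if (2*M - 1 - j) < M then (1:ℝ) else -1) * x ^ (2*M - 1 - j) * y ^ j) (2*M)]
    rw [show range (2*M) = Ico 0 (2*M) by rw [range_eq_Ico],
      ← Finset.sum_Ico_consecutive _ (by omega : 0 ≤ M) (by omega : M ≤ 2*M)]
    have hA : ∑ i ∈ Ico 0 M, (if (2*M - 1 - i) < M then (1:ℝ) else -1) * x ^ (2*M-1-i) * y ^ i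
        = -(x ^ M * ∑ k ∈ range M, y ^ k * x ^ (M - 1 - k)) := by
      rw [Finset.mul_sum, ← Finset.sum_neg_distrib]
      rw [← range_eq_Ico]
      refine Finset.sum_congr rfl fun i hi => ?_
      rw [mem_range] at hi
      rcases Nat.eq_zero_or_pos M with hM | hM
      · omega
      rw [if_neg (by omega)]
      rw [show (2*M-1-i) = M + (M-1-i) by omega, pow_add]
      ring
    have hB : ∑ i ∈ Ico M (2*M), (if (2*M - 1 - i) < M then (1:ℝ) else -1) * x ^ (2*M-1-i) * y ^ i
        = y ^ M * ∑ k ∈ range M, y ^ k * x ^ (M - 1 - k) := by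
      rw [Finset.sum_Ico_eq_sum_range]
      rw [Finset.mul_sum]
      rw [show 2*M - M = M by omega]
      refine Finset.sum_congr rfl fun k hk => ?_
      rw [mem_range] at hk
      rw [if_pos (by omega)]
      rw [show (2*M-1-(M+k)) = M-1-k by omega, show M + k = k + M by omega, pow_add]
      ring
    rw [hA, hB]
    ring
  rw [key]
  by_cases hmn : m = n
  · subst hmn
    simp only [Matrix.of_apply, if_pos rfl, ← hx, ← hy]
    simp
    left; exact sub_self _
  · simp only [Matrix.of_apply, if_neg hmn]
    have hxy : y - x ≠ 0 := sub_ne_zero.mpr fun h => hmn (hl (hy ▸ hx ▸ h)).symm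
    rw [div_eq_iff hxy]
    have hg := geom_sum₂_mul y x M
    calc (y^M - x^M)^2 = (y^M - x^M) * (y^M - x^M) := by ring
    _ = (y^M - x^M) * ((∑ i ∈ range M, y ^ i * x ^ (M-1-i)) * (y - x)) := by rw [hg]
    _ = (y ^ M - x ^ M) * (∑ k ∈ range M, y ^ k * x ^ (M - 1 - k)) * (y - x) := by ring

def pairIdx (M : ℕ) : Fin M × Fin 2 ≃ Fin (2*M) where
  toFun x := ⟨2*(x.1:ℕ) + (x.2:ℕ), by have := x.1.isLt; have := x.2.isLt; omega⟩
  invFun i := (⟨(i:ℕ)/2, by have := i.isLt; omega⟩, ⟨(i:ℕ)%2, by omega⟩)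
  left_inv x := by
    ext
    · show (2*(x.1:ℕ) + (x.2:ℕ))/2 = x.1
      have := x.2.isLt; omega
    · show (2*(x.1:ℕ) + (x.2:ℕ))%2 = x.2
      have := x.2.isLt; omega
  right_inv i := by
    apply Fin.ext
    show 2*((i:ℕ)/2) + (i:ℕ)%2 = (i:ℕ)
    omega

lemma pairIdx_zero {M : ℕ} (m : Fin M) : pairIdx M (m, 0) = pA m := rfl
lemma pairIdx_one {M : ℕ} (m : Fin M) : pairIdx M (m, 1) = pB m := rfl

/-- the sign-flip permutation on `Fin 2` coming from a boolean -/
def flip2 (b : Bool) : Perm (Fin 2) := if b then Equiv.swap 0 1 else 1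

noncomputable def psi {M : ℕ} (π : Perm (Fin M)) (ε : Fin M → Bool) : Perm (Fin (2*M)) :=
  ((pairIdx M).permCongr (Equiv.prodCongrLeft (fun b : Fin 2 =>
      if b = 1 then (Fin.revPerm : Perm (Fin M)) else 1))) *
  ((pairIdx M).permCongr (Equiv.prodCongrLeft (fun _ : Fin 2 => π))) *
  ((pairIdx M).permCongr (Equiv.prodCongrRight (fun m : Fin M => flip2 (ε m))))

lemma psi_apply {M : ℕ} (π : Perm (Fin M)) (ε : Fin M → Bool) (m : Fin M) (b : Fin 2) :
    psi π ε (pairIdx M (m, b)) =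
      pairIdx M (if flip2 (ε m) b = 1 then Fin.revPerm (π m) else π m, flip2 (ε m) b) := by
  unfold psi
  simp only [Perm.mul_apply, Equiv.permCongr_apply, Equiv.symm_apply_apply,
    Equiv.prodCongrRight_apply, Equiv.prodCongrLeft_apply]
  by_cases hb : flip2 (ε m) b = 1
  · rw [hb]
    simp
  · have hb0 : flip2 (ε m) b = 0 := by omega
    rw [hb0]
    simp


lemma sign_psi {M : ℕ} (π : Perm (Fin M)) (ε : Fin M → Bool) :
    Equiv.Perm.sign (psi π ε) = (-1)^(M/2) * ∏ m : Fin M, (if ε m then (-1 : ℤˣ) else 1) := by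
  unfold psi
  rw [_root_.map_mul, _root_.map_mul, Perm.sign_permCongr, Perm.sign_permCongr, Perm.sign_permCongr,
    Perm.sign_prodCongrLeft, Perm.sign_prodCongrLeft, Perm.sign_prodCongrRight]
  have h1 : ∏ b : Fin 2, Equiv.Perm.sign (if b = 1 then (Fin.revPerm : Perm (Fin M)) else 1)
      = (-1)^(M/2) := by
    rw [Fin.prod_univ_two]
    simp [sign_revPerm]
  have h2 : ∏ _b : Fin 2, Equiv.Perm.sign π = 1 := by
    rw [Fin.prod_univ_two]
    rcases Int.units_eq_one_or (Equiv.Perm.sign π) with h | h <;> rw [h] <;> norm_num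
  have h3 : ∏ m : Fin M, Equiv.Perm.sign (flip2 (ε m))
      = ∏ m : Fin M, (if ε m then (-1 : ℤˣ) else 1) := by
    refine Finset.prod_congr rfl fun m _ => ?_
    unfold flip2
    by_cases h : ε m <;> simp [h]
  rw [h1, h2, h3, mul_one]

lemma pairIdx_val {M : ℕ} (x : Fin M × Fin 2) :
    ((pairIdx M x : Fin (2*M)) : ℕ) = 2*(x.1:ℕ) + (x.2:ℕ) := rfl

lemma flip2_false_zero : flip2 false 0 = 0 := by decide
lemma flip2_false_one : flip2 false 1 = 1 := by decide
lemma flip2_true_zero : flip2 true 0 = 1 := by decide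
lemma flip2_true_one : flip2 true 1 = 0 := by decide

lemma psi_pA {M : ℕ} (π : Perm (Fin M)) (ε : Fin M → Bool) (m : Fin M) :
    ((psi π ε (pA m) : Fin (2*M)) : ℕ)
      = if ε m then 2*M - 1 - 2*(π m : ℕ) else 2*(π m : ℕ) := by
  rw [← pairIdx_zero, psi_apply]
  cases hε : ε m
  · rw [flip2_false_zero]
    simp only [if_neg (by decide : ¬ ((0 : Fin 2) = 1))]
    rw [pairIdx_val]
    simp
  · rw [flip2_true_zero, if_pos rfl, pairIdx_val]
    have h1 := (π m).isLt
    simp only [Fin.revPerm_apply, Fin.val_rev]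
    have h2 := (π m).isLt
    norm_num
    omega


lemma psi_pB {M : ℕ} (π : Perm (Fin M)) (ε : Fin M → Bool) (m : Fin M) :
    ((psi π ε (pB m) : Fin (2*M)) : ℕ)
      = if ε m then 2*(π m : ℕ) else 2*M - 1 - 2*(π m : ℕ) := by
  rw [← pairIdx_one, psi_apply]
  cases hε : ε m
  · rw [flip2_false_one, if_pos rfl, pairIdx_val]
    have h1 := (π m).isLt
    simp only [Fin.revPerm_apply, Fin.val_rev]
    have h2 := (π m).isLt
    norm_num
    omega

  · rw [flip2_true_one]
    simp only [if_neg (by decide : ¬ ((0 : Fin 2) = 1))]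
    rw [pairIdx_val]
    simp

lemma prodEta (M : ℕ) : ∏ m : Fin M, (if 2*(m:ℕ) < M then (1:ℝ) else -1) = (-1)^(M/2) := by
  rw [Fin.prod_univ_eq_prod_range (fun k => if 2*k < M then (1:ℝ) else -1) M]
  rw [Finset.prod_ite]
  simp only [prod_const_one, one_mul, prod_const]
  congr 1
  have h : (range M).filter (fun k => ¬ 2*k < M) = Ico ((M+1)/2) M := by
    ext k
    simp only [mem_filter, mem_range, mem_Ico, not_lt]
    omega
  rw [h, Nat.card_Ico]
  omega

lemma term_psi {M : ℕ} (π : Perm (Fin M)) (ε : Fin M → Bool) :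
    ((Equiv.Perm.sign (psi π ε) : ℤ) : ℝ) *
      ∏ m : Fin M, (A0 M) (psi π ε (pA m)) (psi π ε (pB m)) = 1 := by
  have hprod : ∏ m : Fin M, (A0 M) (psi π ε (pA m)) (psi π ε (pB m))
      = (∏ m : Fin M, (if ε m then (-1:ℝ) else 1)) *
        ∏ m : Fin M, (if 2*(m:ℕ) < M then (1:ℝ) else -1) := by
    rw [← Equiv.prod_comp π (fun k => if 2*(k:ℕ) < M then (1:ℝ) else -1),
      ← Finset.prod_mul_distrib]
    refine Finset.prod_congr rfl fun m _ => ?_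
    have ha := psi_pA π ε m
    have hb := psi_pB π ε m
    have hlt := (π m).isLt
    show (if ((psi π ε (pA m) : Fin (2*M)) : ℕ) + ((psi π ε (pB m) : Fin (2*M)) : ℕ) = 2*M-1
        then (if ((psi π ε (pA m) : Fin (2*M)) : ℕ) < M then (1:ℝ) else -1) else 0) = _
    rw [ha, hb]
    cases hε : ε m
    · simp only [Bool.false_eq_true, if_false]
      rw [if_pos (by omega)]
      by_cases hm : 2*((π m : Fin M):ℕ) < M
      · norm_num
      · norm_num
    · simp only [if_true]
      rw [if_pos (by omega)]
      by_cases hm : 2*((π m : Fin M):ℕ) < M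
      · rw [if_neg (by omega), if_pos hm]; norm_num
      · rw [if_pos (by omega), if_neg hm]; norm_num
  rw [hprod, prodEta, sign_psi]
  have hcast : (((((-1:ℤˣ)^(M/2) * ∏ m : Fin M, (if ε m then (-1 : ℤˣ) else 1)) : ℤˣ) : ℤ) : ℝ)
      = (-1:ℝ)^(M/2) * ∏ m : Fin M, (if ε m then (-1:ℝ) else 1) := by
    push_cast [Units.val_mul, Units.val_pow_eq_pow_val]
    congr 1
    refine Finset.prod_congr rfl fun m _ => ?_
    cases h : ε m <;> simp
  rw [hcast]
  have hE : (∏ m : Fin M, (if ε m then (-1:ℝ) else 1)) *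
      (∏ m : Fin M, (if ε m then (-1:ℝ) else 1)) = 1 := by
    rw [← Finset.prod_mul_distrib]
    rw [Finset.prod_eq_one]
    intro m _
    cases h : ε m <;> norm_num
  have hP : ((-1:ℝ)^(M/2)) * ((-1:ℝ)^(M/2)) = 1 := by
    rw [← mul_pow]
    norm_num
  calc (-1:ℝ)^(M/2) * (∏ m : Fin M, (if ε m then (-1:ℝ) else 1)) *
        ((∏ m : Fin M, (if ε m then (-1:ℝ) else 1)) * (-1:ℝ)^(M/2))
      = (((-1:ℝ)^(M/2)) * ((-1:ℝ)^(M/2))) * ((∏ m : Fin M, (if ε m then (-1:ℝ) else 1)) *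
        (∏ m : Fin M, (if ε m then (-1:ℝ) else 1))) := by ring
    _ = 1 := by rw [hE, hP, one_mul]

lemma psi_sums {M : ℕ} (π : Perm (Fin M)) (ε : Fin M → Bool) (m : Fin M) :
    ((psi π ε (pA m)):ℕ) + ((psi π ε (pB m)):ℕ) = 2*M-1 := by
  rw [psi_pA, psi_pB]
  have := (π m).isLt
  cases h : ε m
  · simp only [Bool.false_eq_true, if_false]; omega
  · simp only [if_true]; omega

lemma psi_inj {M : ℕ} (p q : Perm (Fin M) × (Fin M → Bool))
    (h : psi p.1 p.2 = psi q.1 q.2) : p = q := by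
  obtain ⟨π, ε⟩ := p
  obtain ⟨π', ε'⟩ := q
  have hmm : ∀ m : Fin M, ε m = ε' m ∧ π m = π' m := by
    intro m
    have hA : ((psi π ε (pA m)):ℕ) = ((psi π' ε' (pA m)):ℕ) := by rw [h]
    rw [psi_pA, psi_pA] at hA
    have hlt := (π m).isLt
    have hlt' := (π' m).isLt
    cases h1 : ε m <;> cases h2 : ε' m <;> rw [h1, h2] at hA <;>
      simp only [Bool.false_eq_true, if_false, if_true] at hA
    · exact ⟨rfl, Fin.ext (by omega)⟩
    · omega
    · omega
    · exact ⟨rfl, Fin.ext (by omega)⟩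
  exact Prod.ext (Equiv.ext fun m => (hmm m).2) (funext fun m => (hmm m).1)

lemma psi_surj {M : ℕ} (σ : Perm (Fin (2*M)))
    (hσ : ∀ m : Fin M, ((σ (pA m)):ℕ) + ((σ (pB m)):ℕ) = 2*M-1) :
    ∃ p : Perm (Fin M) × (Fin M → Bool), psi p.1 p.2 = σ := by
  classical
  set z : Fin M → Fin (2*M) :=
    fun m => if ((σ (pA m)):ℕ) % 2 = 0 then σ (pA m) else σ (pB m) with hz
  have hzeven : ∀ m, ((z m):ℕ) % 2 = 0 := by
    intro m
    simp only [hz]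
    by_cases hc : ((σ (pA m)):ℕ) % 2 = 0
    · rw [if_pos hc]; exact hc
    · rw [if_neg hc]
      have := hσ m
      have := (σ (pA m)).isLt
      omega
  set π0 : Fin M → Fin M := fun m => ⟨((z m):ℕ)/2, by have := (z m).isLt; omega⟩ with hπ0
  have hπ0val : ∀ m, ((π0 m):ℕ) = ((z m):ℕ)/2 := fun m => rfl
  have hinj : Function.Injective π0 := by
    intro m m' hmm'
    have h1 : ((z m):ℕ) = ((z m'):ℕ) := by
      have e1 : ((π0 m):ℕ) = ((π0 m'):ℕ) := by rw [hmm']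
      rw [hπ0val, hπ0val] at e1
      have := hzeven m
      have := hzeven m'
      omega
    have h2 : z m = z m' := Fin.ext h1
    simp only [hz] at h2
    have vA : ∀ k : Fin M, ((pA k : Fin (2*M)):ℕ) = 2*(k:ℕ) := fun k => rfl
    have vB : ∀ k : Fin M, ((pB k : Fin (2*M)):ℕ) = 2*(k:ℕ)+1 := fun k => rfl
    by_cases c1 : ((σ (pA m)):ℕ) % 2 = 0 <;> by_cases c2 : ((σ (pA m')):ℕ) % 2 = 0 <;>
      simp only [c1, c2, ite_true, ite_false, if_pos, if_neg] at h2 <;>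
      have h3 := σ.injective h2 <;>
      have h4 : _ = _ := congrArg Fin.val h3
    · rw [vA, vA] at h4; exact Fin.ext (by omega)
    · rw [vA, vB] at h4; exact Fin.ext (by omega)
    · rw [vB, vA] at h4; exact Fin.ext (by omega)
    · rw [vB, vB] at h4; exact Fin.ext (by omega)
  set π : Perm (Fin M) := Equiv.ofBijective π0 ((Finite.injective_iff_bijective).mp hinj)
    with hπ
  set ε : Fin M → Bool := fun m => decide (¬ ((σ (pA m)):ℕ) % 2 = 0) with hεdef
  refine ⟨⟨π, ε⟩, ?_⟩
  show psi π ε = σ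
  apply Equiv.ext
  intro x
  obtain ⟨⟨m, b⟩, rfl⟩ := (pairIdx M).surjective x
  rw [psi_apply]
  have hπm : ((π m : Fin M):ℕ) = ((z m):ℕ)/2 := rfl
  have hzlt := (z m).isLt
  have hze := hzeven m
  have hσm := hσ m
  have halt := (σ (pA m)).isLt
  have hb : b = 0 ∨ b = 1 := by omega
  have hrev : ((Fin.revPerm (π m) : Fin M):ℕ) = M - (((π m : Fin M):ℕ) + 1) := by
    simp [Fin.val_rev]
  by_cases hc : ((σ (pA m)):ℕ) % 2 = 0
  · have hε : ε m = false := by simp [hεdef, hc]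
    have hzv : ((z m):ℕ) = ((σ (pA m)):ℕ) := by simp only [hz]; rw [if_pos hc]
    rcases hb with rfl | rfl
    · rw [hε, flip2_false_zero]
      simp only [if_neg (by decide : ¬ ((0 : Fin 2) = 1))]
      rw [pairIdx_zero, pairIdx_zero]
      apply Fin.ext
      show 2*((π m : Fin M):ℕ) = ((σ (pA m)):ℕ)
      rw [hπm]
      omega
    · rw [hε, flip2_false_one, if_pos rfl, pairIdx_one, pairIdx_one]
      apply Fin.ext
      show 2*((Fin.revPerm (π m) : Fin M):ℕ)+1 = ((σ (pB m)):ℕ)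
      rw [hrev, hπm]
      omega
  · have hε : ε m = true := by simp [hεdef]; omega
    have hzv : ((z m):ℕ) = ((σ (pB m)):ℕ) := by simp only [hz]; rw [if_neg hc]
    rcases hb with rfl | rfl
    · rw [hε, flip2_true_zero, if_pos rfl, pairIdx_zero, pairIdx_one]
      apply Fin.ext
      show 2*((Fin.revPerm (π m) : Fin M):ℕ)+1 = ((σ (pA m)):ℕ)
      rw [hrev, hπm]
      omega
    · rw [hε, flip2_true_one]
      simp only [if_neg (by decide : ¬ ((0 : Fin 2) = 1))]
      rw [pairIdx_one, pairIdx_zero]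
      apply Fin.ext
      show 2*((π m : Fin M):ℕ) = ((σ (pB m)):ℕ)
      rw [hπm]
      omega

lemma pfSum_A0 (M : ℕ) :
    ∑ σ : Perm (Fin (2*M)), ((Equiv.Perm.sign σ : ℤ):ℝ) *
        ∏ m : Fin M, (A0 M) (σ (pA m)) (σ (pB m))
      = 2^M * (Nat.factorial M) := by
  classical
  have hzero : ∀ σ ∈ (univ : Finset (Perm (Fin (2*M)))),
      (((Equiv.Perm.sign σ : ℤ):ℝ) * ∏ m : Fin M, (A0 M) (σ (pA m)) (σ (pB m))) ≠ 0 →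
      (∀ m : Fin M, ((σ (pA m)):ℕ) + ((σ (pB m)):ℕ) = 2*M-1) := by
    intro σ _ hne
    by_contra hP
    push_neg at hP
    obtain ⟨m, hm⟩ := hP
    apply hne
    have h0 : (A0 M) (σ (pA m)) (σ (pB m)) = 0 := by
      simp only [A0, Matrix.of_apply]
      rw [if_neg hm]
    rw [Finset.prod_eq_zero (mem_univ m) h0, mul_zero]
  rw [← Finset.sum_filter_of_ne hzero]
  have hbij := Finset.sum_bij
    (s := (univ : Finset (Perm (Fin M) × (Fin M → Bool))))
    (t := (univ : Finset (Perm (Fin (2*M)))).filter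
      (fun σ => ∀ m : Fin M, ((σ (pA m)):ℕ) + ((σ (pB m)):ℕ) = 2*M-1))
    (f := fun p => ((Equiv.Perm.sign (psi p.1 p.2) : ℤ):ℝ) *
        ∏ m : Fin M, (A0 M) ((psi p.1 p.2) (pA m)) ((psi p.1 p.2) (pB m)))
    (g := fun σ => ((Equiv.Perm.sign σ : ℤ):ℝ) *
        ∏ m : Fin M, (A0 M) (σ (pA m)) (σ (pB m)))
    (fun p _ => psi p.1 p.2)
    (fun p _ => mem_filter.mpr ⟨mem_univ _, psi_sums p.1 p.2⟩)
    (fun p _ q _ h => psi_inj p q h)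
    (fun σ hσ => by
      obtain ⟨p, hp⟩ := psi_surj σ (mem_filter.mp hσ).2
      exact ⟨p, mem_univ _, hp⟩)
    (fun p _ => rfl)
  rw [← hbij]
  have hone : ∀ p ∈ (univ : Finset (Perm (Fin M) × (Fin M → Bool))),
      ((Equiv.Perm.sign (psi p.1 p.2) : ℤ):ℝ) *
        ∏ m : Fin M, (A0 M) ((psi p.1 p.2) (pA m)) ((psi p.1 p.2) (pB m)) = 1 :=
    fun p _ => term_psi p.1 p.2
  rw [Finset.sum_congr rfl hone, Finset.sum_const, Finset.card_univ, Fintype.card_prod,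
    Fintype.card_perm, Fintype.card_fun, Fintype.card_fin, Fintype.card_bool]
  rw [nsmul_eq_mul, mul_one]
  push_cast
  ring

noncomputable def pfX {M : ℕ} (A : Matrix (Fin (2*M)) (Fin (2*M)) ℝ) : ℝ :=
  (1 / (2^M * (Nat.factorial M) : ℝ)) * pfSum A

lemma prod_pairs {n : ℕ} (f : Fin n → Fin n → ℝ) :
    ∏ q ∈ Finset.univ.filter (fun q : Fin n × Fin n => q.1 < q.2), f q.1 q.2
      = ∏ i : Fin n, ∏ j ∈ Finset.Ioi i, f i j := by
  rw [Finset.prod_sigma']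
  refine (Finset.prod_bij (fun (q : Σ _ : Fin n, Fin n) _ => ((q.1, q.2) : Fin n × Fin n))
    ?_ ?_ ?_ ?_).symm
  · rintro ⟨i, j⟩ hq
    simp only [Finset.mem_sigma, Finset.mem_Ioi] at hq
    simp only [Finset.mem_filter, Finset.mem_univ, true_and]
    exact hq.2
  · rintro ⟨i, j⟩ _ ⟨i', j'⟩ _ h
    simp only [Prod.mk.injEq] at h
    simp [Sigma.ext_iff, h.1, h.2]
  · rintro ⟨i, j⟩ hq
    simp only [Finset.mem_filter, Finset.mem_univ, true_and] at hq
    exact ⟨⟨i, j⟩, by simp [Finset.mem_sigma, Finset.mem_Ioi, hq], rfl⟩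
  · intros; rfl

end PfaffianAux

lemma pf_eq_pfX {M : ℕ} (A : Matrix (Fin (2*M)) (Fin (2*M)) ℝ) : pf A = pfX A := rfl

/-- For `N = 2M` distinct reals `λ_1, …, λ_N` and the antisymmetric matrix
`S(λ) = [(λ_n^M - λ_m^M)^2 / (λ_n - λ_m)]` (with zero diagonal),
`Pf S(λ) = ∏_{m<n} (λ_n - λ_m)`. -/
theorem stmt2 (M : ℕ) (l : Fin (2*M) → ℝ) (hl : Function.Injective l) :
    pf (Matrix.of fun m n : Fin (2*M) =>
        if m = n then 0 else (l n ^ M - l m ^ M)^2 / (l n - l m)) =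
      ∏ q ∈ Finset.univ.filter (fun q : Fin (2*M) × Fin (2*M) => q.1 < q.2),
        (l q.2 - l q.1) := by
  rw [smat_eq l hl, pf_eq_pfX]
  unfold pfX
  rw [pfSum_conj]
  have hA0 : pfSum (A0 M) = 2^M * (Nat.factorial M) := pfSum_A0 M
  rw [hA0, Matrix.det_vandermonde]
  rw [← prod_pairs (fun i j => l j - l i)]
  have hc : ((2:ℝ)^M * (Nat.factorial M) : ℝ) ≠ 0 := by positivity
  field_simp
end

section
/- Hyperpfaffian formula for even-square $\beta$: Let $L$ be even, $N \geq 1$, $\beta = L^2$, and let $\nu$ be a finite Borel measure on $\mathbb{R}$ with all moments finite. Let $(p_n)_{n=1}^{NL}$ be any monic polynomials with $\deg p_n = n-1$, and define the $L$-form $\omega = \sum_{\mathfrak t} \left(\int_{\mathbb R} \mathrm{Wr}(\mathbf p_{\mathfrak t}; x)\, d\nu(x)\right) \epsilon_{\mathfrak t}$, summed over strictly increasing $\mathfrak t:\{1,\ldots,L\}\to\{1,\ldots,NL\}$. Then $\frac{1}{N!}\int_{\mathbb{R}^N} \prod_{m<n}|\lambda_n - \lambda_m|^{L^2}\, d\nu^N(\boldsymbol\lambda)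 = \mathrm{PF}(\omega)$. -/
open scoped Classical
open MeasureTheory

/-- The modified `k`-th differentiation operator `D^k f(x) = f^{(k)}(x)/k!`. -/
noncomputable def Dop (k : ℕ) (q : Polynomial ℝ) (x : ℝ) : ℝ :=
  (Polynomial.derivative^[k] q).eval x / (Nat.factorial k : ℝ)

/-- The Wronskian `Wr(p_𝔱; x) = det [D^{ℓ-1} p_{𝔱(n)}(x)]_{n,ℓ=1}^L`. -/
noncomputable def Wr {L n : ℕ} (p : Fin n → Polynomial ℝ) (t : Fin L → Fin n) (x : ℝ) : ℝ :=
  Matrix.det (Matrix.of fun a ℓ : Fin L => Dop ℓ (p (t a)) x)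

/-- The basis vector `e_i` of `ℝ^n` inside the exterior algebra. -/
noncomputable def ee (n : ℕ) (i : Fin n) : ExteriorAlgebra ℝ (Fin n → ℝ) :=
  ExteriorAlgebra.ι ℝ (Pi.single i 1)

/-- `ε_𝔱 = e_{𝔱(1)} ∧ ⋯ ∧ e_{𝔱(L)}`. -/
noncomputable def eps {n L : ℕ} (t : Fin L → Fin n) : ExteriorAlgebra ℝ (Fin n → ℝ) :=
  (List.ofFn fun ℓ => ee n (t ℓ)).prod

/-- The volume form `e_1 ∧ ⋯ ∧ e_n` of `ℝ^n`. -/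
noncomputable def vol (n : ℕ) : ExteriorAlgebra ℝ (Fin n → ℝ) :=
  (List.ofFn fun i => ee n i).prod

-- Dop as a linear map in q
noncomputable def DopL (k : ℕ) (x : ℝ) : Polynomial ℝ →ₗ[ℝ] ℝ :=
  ((Nat.factorial k : ℝ)⁻¹) • ((Polynomial.leval x) ∘ₗ ((Polynomial.derivative : Polynomial ℝ →ₗ[ℝ] Polynomial ℝ) ^ k))

lemma DopL_apply (k : ℕ) (x : ℝ) (q : Polynomial ℝ) : DopL k x q = Dop k q x := by
  simp [DopL, Dop, Module.End.pow_apply, div_eq_inv_mul, Polynomial.leval_apply]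

-- list product expansion
lemma list_prod_ofFn_sum {R ι : Type*} [Semiring R] [Fintype ι] :
    ∀ (N : ℕ) (x : Fin N → ι → R),
      (List.ofFn fun n => ∑ t : ι, x n t).prod
        = ∑ f : Fin N → ι, (List.ofFn fun n => x n (f n)).prod := by
  intro N
  induction N with
  | zero => intro x; simp
  | succ N ih =>
    intro x
    rw [List.ofFn_succ, List.prod_cons, ih (fun n t => x n.succ t), Finset.sum_mul_sum]
    rw [← (Fin.consEquiv fun _ : Fin (N+1) => ι).sum_comp]
    rw [Fintype.sum_prod_type]
    refine Finset.sum_congr rfl fun t _ => Finset.sum_congr rfl fun f _ => ?_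
    rw [List.ofFn_succ, List.prod_cons]
    simp [Fin.consEquiv]

lemma list_prod_ofFn_smul {R A : Type*} [CommSemiring R] [Semiring A] [Algebra R A] :
    ∀ (N : ℕ) (a : Fin N → R) (y : Fin N → A),
      (List.ofFn fun n => a n • y n).prod = (∏ n, a n) • (List.ofFn fun n => y n).prod := by
  intro N
  induction N with
  | zero => intro a y; simp
  | succ N ih =>
    intro a y
    rw [List.ofFn_succ, List.prod_cons, ih (fun n => a n.succ) (fun n => y n.succ),
      List.ofFn_succ, List.prod_cons, Fin.prod_univ_succ]
    rw [smul_mul_assoc, mul_smul_comm, smul_smul]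

lemma altmap_sum_apply {R M N ι α : Type*} [CommSemiring R] [AddCommMonoid M] [Module R M]
    [AddCommMonoid N] [Module R N] (s : Finset α) (g : α → (M [⋀^ι]→ₗ[R] N)) (u : ι → M) :
    (∑ t ∈ s, g t) u = ∑ t ∈ s, g t u := by
  classical
  induction s using Finset.induction with
  | empty => simp
  | insert a s' h ih => rw [Finset.sum_insert h, Finset.sum_insert h, ← ih]; rfl

-- key derivative lemma
lemma key_deriv (a : ℝ) : ∀ (s : ℕ) (g : Polynomial ℝ),
    ((Polynomial.derivative^[s] ((Polynomial.X - Polynomial.C a) ^ s * g)).eval a)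
      = (s.factorial : ℝ) * g.eval a := by
  intro s
  induction s with
  | zero => intro g; simp
  | succ s ih =>
    intro g
    rw [Function.iterate_succ_apply]
    have hd : Polynomial.derivative ((Polynomial.X - Polynomial.C a) ^ (s+1) * g)
        = (Polynomial.X - Polynomial.C a) ^ s *
            (((s:ℝ)+1) • g + (Polynomial.X - Polynomial.C a) * Polynomial.derivative g) := by
      rw [Polynomial.derivative_mul, Polynomial.derivative_pow, Polynomial.derivative_sub,
        Polynomial.derivative_X, Polynomial.derivative_C, sub_zero, mul_one,
        Polynomial.smul_eq_C_mul]
      simp only [map_add, map_natCast, map_one]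
      push_cast
      ring
    rw [hd, ih]
    simp [Polynomial.eval_smul, Nat.factorial_succ]
    ring

-- integrability of polynomials
lemma integrable_poly_eval (ν : Measure ℝ) [IsFiniteMeasure ν]
    (hmom : ∀ k : ℕ, Integrable (fun x => x ^ k) ν) (q : Polynomial ℝ) :
    Integrable (fun x => q.eval x) ν := by
  have : (fun x => q.eval x)
      = fun x => ∑ i ∈ Finset.range (q.natDegree + 1), q.coeff i * x ^ i := by
    funext x; rw [Polynomial.eval_eq_sum_range]
  rw [this]
  exact integrable_finset_sum _ fun i _ => (hmom i).const_mul _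

-- Fubini for products over pi measures
lemma integral_pi_prod' : ∀ (n : ℕ) (μ : Measure ℝ), IsFiniteMeasure μ →
    ∀ (f : Fin n → ℝ → ℝ),
    ∫ x : Fin n → ℝ, ∏ i, f i (x i) ∂(Measure.pi fun _ => μ) = ∏ i, ∫ x, f i x ∂μ := by
  intro n
  induction n with
  | zero =>
    intro μ hμ f
    simp [Measure.pi_empty_univ, measureReal_def]
  | succ n ih =>
    intro μ hμ f
    have hmp := (MeasureTheory.measurePreserving_piFinSuccAbove (fun _ : Fin (n+1) => μ) 0).symm
    calc ∫ x : Fin (n+1) → ℝ, ∏ i, f i (x i) ∂(Measure.pi fun _ => μ)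
        = ∫ y : ℝ × (Fin n → ℝ), f 0 y.1 * ∏ i : Fin n, f i.succ (y.2 i)
            ∂(μ.prod (Measure.pi fun _ => μ)) := by
          rw [← hmp.integral_comp']
          congr 1
          funext y
          rw [Fin.prod_univ_succ]
          simp [MeasurableEquiv.piFinSuccAbove_symm_apply, Fin.insertNthEquiv,
            Fin.zero_succAbove]
      _ = (∫ x, f 0 x ∂μ) * ∏ i : Fin n, ∫ x, f i.succ x ∂μ := by
          have h2 := MeasureTheory.integral_prod_mul (μ := μ)
            (ν := Measure.pi fun _ : Fin n => μ) (f 0) (fun w => ∏ i : Fin n, f i.succ (w i))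
          rw [h2, ih μ hμ]
      _ = ∏ i, ∫ x, f i x ∂μ := by rw [Fin.prod_univ_succ]

lemma integrable_pi_prod' : ∀ (n : ℕ) (μ : Measure ℝ), IsFiniteMeasure μ →
    ∀ (f : Fin n → ℝ → ℝ), (∀ i, Integrable (f i) μ) →
    Integrable (fun x : Fin n → ℝ => ∏ i, f i (x i)) (Measure.pi fun _ => μ) := by
  intro n
  induction n with
  | zero =>
    intro μ hμ f hf
    simp only [Finset.univ_eq_empty, Finset.prod_empty]
    exact integrable_const 1
  | succ n ih =>
    intro μ hμ f hf
    have hmp := (MeasureTheory.measurePreserving_piFinSuccAbove (fun _ : Fin (n+1) => μ) 0).symm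
    rw [← hmp.integrable_comp_emb (MeasurableEquiv.measurableEmbedding _)]
    have : ((fun x : Fin (n+1) → ℝ => ∏ i, f i (x i)) ∘
        (MeasurableEquiv.piFinSuccAbove (fun _ : Fin (n+1) => ℝ) 0).symm)
        = fun y : ℝ × (Fin n → ℝ) => f 0 y.1 * ∏ i : Fin n, f i.succ (y.2 i) := by
      funext y
      simp only [Function.comp]
      rw [Fin.prod_univ_succ]
      simp [MeasurableEquiv.piFinSuccAbove_symm_apply, Fin.insertNthEquiv, Fin.zero_succAbove]
    rw [this]
    exact (hf 0).mul_prod (ih μ hμ (fun i => f i.succ) (fun i => hf i.succ))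

lemma eps_eq_iMulti {n L : ℕ} (t : Fin L → Fin n) :
    eps t = ExteriorAlgebra.ιMulti ℝ L (fun ℓ => Pi.single (t ℓ) 1) := by
  rw [ExteriorAlgebra.ιMulti_apply]; rfl

lemma vol_eq_iMulti (n : ℕ) :
    vol n = ExteriorAlgebra.ιMulti ℝ n (fun i => Pi.single i 1) := by
  rw [ExteriorAlgebra.ιMulti_apply]; rfl

lemma eps_comp_perm {n L : ℕ} (t : Fin L → Fin n) (σ : Equiv.Perm (Fin L)) :
    eps (t ∘ σ) = ((Equiv.Perm.sign σ : ℤ) : ℝ) • eps t := by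
  rw [eps_eq_iMulti, eps_eq_iMulti]
  have h := (ExteriorAlgebra.ιMulti ℝ L
      (M := Fin n → ℝ)).map_perm (fun ℓ => Pi.single (t ℓ) 1) σ
  have h2 : (fun ℓ => Pi.single ((t ∘ σ) ℓ) (1:ℝ)) = (fun ℓ => Pi.single (t ℓ) 1) ∘ σ := rfl
  rw [h2, h]
  rcases Int.units_eq_one_or (Equiv.Perm.sign σ) with hσ | hσ <;> rw [hσ] <;> simp

noncomputable def minorA {M L : ℕ} (t : Fin L → Fin M) :
    (Fin M → ℝ) [⋀^Fin L]→ₗ[ℝ] ℝ :=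
  Matrix.detRowAlternating.compLinearMap (LinearMap.funLeft ℝ ℝ t)

lemma minorA_apply {M L : ℕ} (t : Fin L → Fin M) (u : Fin L → Fin M → ℝ) :
    minorA t u = Matrix.det (Matrix.of fun ℓ a => u ℓ (t a)) := by
  rfl

noncomputable def phi0 (M : ℕ) : ExteriorAlgebra ℝ (Fin M → ℝ) →ₗ[ℝ] ℝ :=
  ExteriorAlgebra.liftAlternating
    (Function.update (fun i => (0 : (Fin M → ℝ) [⋀^Fin i]→ₗ[ℝ] ℝ)) M
      (Pi.basisFun ℝ (Fin M)).det)

lemma phi0_vol (M : ℕ) : phi0 M (vol M) = 1 := by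
  rw [vol_eq_iMulti, phi0, ExteriorAlgebra.liftAlternating_apply_ιMulti,
    Function.update_self]
  have h : (fun i : Fin M => Pi.single i (1:ℝ)) = ⇑(Pi.basisFun ℝ (Fin M)) := by
    funext i; simp
  rw [h, Module.Basis.det_self]

lemma wedge_det (M : ℕ) (u : Fin M → (Fin M → ℝ)) :
    ExteriorAlgebra.ιMulti ℝ M u = Matrix.det (Matrix.of fun k j => u k j) • vol M := by
  have key : (ExteriorAlgebra.ιMulti ℝ M (M := Fin M → ℝ))
      = (LinearMap.toSpanSingleton ℝ _ (vol M)).compAlternatingMap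
          Matrix.detRowAlternating := by
    apply Module.Basis.ext_alternating (Pi.basisFun ℝ (Fin M))
    intro v hv
    have hb : Function.Bijective v := Finite.injective_iff_bijective.mp hv
    set σ : Equiv.Perm (Fin M) := Equiv.ofBijective v hb with hσdef
    have hvσ : ∀ i, v i = σ i := fun i => rfl
    simp only [Pi.basisFun_apply]
    have hL : (fun i => Pi.single (v i) (1:ℝ)) = (fun ℓ : Fin M => Pi.single ℓ (1:ℝ)) ∘ σ := by
      funext i; simp [hvσ]
    have hM : Matrix.detRowAlternating (R := ℝ) (fun ℓ => Pi.single (v ℓ) (1:ℝ))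
        = Equiv.Perm.sign σ := by
      have : (Matrix.of fun ℓ a : Fin M => Pi.single (v ℓ) (1:ℝ) a)
          = σ.permMatrix ℝ := by
        ext ℓ a
        rw [Matrix.of_apply, Equiv.Perm.permMatrix, PEquiv.toMatrix_apply,
          Equiv.toPEquiv_apply]
        simp only [Option.mem_def, Option.some_inj]
        rw [Pi.single_apply, ← hvσ]
        simp [eq_comm]
      show Matrix.det (Matrix.of fun ℓ a : Fin M => Pi.single (v ℓ) (1:ℝ) a) = _
      rw [this, Matrix.det_permutation]
    rw [LinearMap.compAlternatingMap_apply, LinearMap.toSpanSingleton_apply, hM,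
      hL, (ExteriorAlgebra.ιMulti ℝ M (M := Fin M → ℝ)).map_perm, ← vol_eq_iMulti]
    rcases Int.units_eq_one_or (Equiv.Perm.sign σ) with hs | hs <;> rw [hs] <;> simp
  have happ := DFunLike.congr_fun key u
  rw [happ, LinearMap.compAlternatingMap_apply, LinearMap.toSpanSingleton_apply]
  rfl

lemma wedge_expand {M L : ℕ} (u : Fin L → (Fin M → ℝ)) :
    ExteriorAlgebra.ιMulti ℝ L u
      = ∑ t ∈ Finset.univ.filter (fun t : Fin L → Fin M => StrictMono t),
          minorA t u • eps t := by
  have key : (ExteriorAlgebra.ιMulti ℝ L (M := Fin M → ℝ))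
      = ∑ t ∈ Finset.univ.filter (fun t : Fin L → Fin M => StrictMono t),
          (LinearMap.toSpanSingleton ℝ _ (eps t)).compAlternatingMap (minorA t) := by
    apply Module.Basis.ext_alternating (Pi.basisFun ℝ (Fin M))
    intro v hv
    simp only [Pi.basisFun_apply]
    rw [altmap_sum_apply]
    -- the sorted version t0 of v
    have hs : (Finset.image v Finset.univ).card = L := by
      rw [Finset.card_image_of_injective _ hv, Finset.card_univ, Fintype.card_fin]
    set s : Finset (Fin M) := Finset.image v Finset.univ with hsdef
    set t0 : Fin L → Fin M := ⇑(s.orderEmbOfFin hs) with ht0def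
    have ht0mono : StrictMono t0 := (s.orderEmbOfFin hs).strictMono
    have hmem : ∀ a, v a ∈ s := fun a => Finset.mem_image_of_mem v (Finset.mem_univ a)
    set e := s.orderIsoOfFin hs with hedef
    have hσinj : Function.Injective (fun a => e.symm ⟨v a, hmem a⟩) := by
      intro a b hab
      have := congrArg e hab
      simp only [OrderIso.apply_symm_apply] at this
      exact hv (congrArg Subtype.val this)
    set σ : Equiv.Perm (Fin L) :=
      Equiv.ofBijective _ (Finite.injective_iff_bijective.mp hσinj) with hσdef
    have hvt0 : ∀ a, v a = t0 (σ a) := by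
      intro a
      have : t0 (σ a) = ↑(e (σ a)) := (Finset.coe_orderIsoOfFin_apply s hs (σ a)).symm
      rw [this]
      show v a = ↑(e (e.symm ⟨v a, hmem a⟩))
      simp
    have ht0mem : t0 ∈ Finset.univ.filter (fun t : Fin L → Fin M => StrictMono t) := by
      simp [Finset.mem_filter, ht0mono]
    rw [Finset.sum_eq_single_of_mem t0 ht0mem]
    · -- main term
      rw [LinearMap.compAlternatingMap_apply, LinearMap.toSpanSingleton_apply]
      have hM : minorA t0 (fun ℓ => Pi.single (v ℓ) (1:ℝ)) = Equiv.Perm.sign σ := by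
        rw [minorA_apply]
        have : (Matrix.of fun ℓ a : Fin L => (Pi.single (v ℓ) (1:ℝ) : Fin M → ℝ) (t0 a))
            = σ.permMatrix ℝ := by
          ext ℓ a
          rw [Matrix.of_apply, Equiv.Perm.permMatrix, PEquiv.toMatrix_apply,
            Equiv.toPEquiv_apply]
          simp only [Option.mem_def, Option.some_inj]
          rw [Pi.single_apply, hvt0 ℓ]
          by_cases h : σ ℓ = a
          · simp [h]
          · have : t0 a ≠ t0 (σ ℓ) := fun hc => h (ht0mono.injective hc).symm
            simp [h, this]
        rw [this, Matrix.det_permutation]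
      rw [hM]
      have hL2 : (fun ℓ => Pi.single (v ℓ) (1:ℝ)) = (fun ℓ => Pi.single (t0 ℓ) (1:ℝ)) ∘ σ := by
        funext ℓ; simp [hvt0 ℓ]
      rw [hL2, (ExteriorAlgebra.ιMulti ℝ L (M := Fin M → ℝ)).map_perm, ← eps_eq_iMulti]
      rcases Int.units_eq_one_or (Equiv.Perm.sign σ) with hsg | hsg <;> rw [hsg] <;> simp
    · -- other terms vanish
      intro t ht htne
      have htmono : StrictMono t := (Finset.mem_filter.mp ht).2
      rw [LinearMap.compAlternatingMap_apply, LinearMap.toSpanSingleton_apply]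
      have hz : minorA t (fun ℓ => Pi.single (v ℓ) (1:ℝ)) = 0 := by
        rw [minorA_apply]
        have hex : ∃ a, ∀ ℓ, v ℓ ≠ t a := by
          by_contra hcon
          push_neg at hcon
          have : ∀ a, t a ∈ s := by
            intro a
            obtain ⟨ℓ, hℓ⟩ := hcon a
            rw [← hℓ]; exact hmem ℓ
          exact htne (Finset.orderEmbOfFin_unique hs this htmono)
        obtain ⟨a, ha⟩ := hex
        apply Matrix.det_eq_zero_of_column_eq_zero a
        intro ℓ
        rw [Matrix.of_apply, Pi.single_apply, if_neg]
        intro hc; exact ha ℓ (by rw [hc])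
      rw [hz, zero_smul]
  have happ := DFunLike.congr_fun key u
  rw [happ, altmap_sum_apply]
  refine Finset.sum_congr rfl fun t _ => ?_
  rw [LinearMap.compAlternatingMap_apply, LinearMap.toSpanSingleton_apply]

lemma Dop_expand {M : ℕ} (k : ℕ) (x : ℝ) (q : Polynomial ℝ) (h : q.natDegree < M) :
    Dop k q x = ∑ j : Fin M, q.coeff j * Dop k (Polynomial.X ^ (j:ℕ)) x := by
  rw [← DopL_apply]
  conv_lhs => rw [q.as_sum_range' M h]
  rw [map_sum, ← Fin.sum_univ_eq_sum_range
    (fun j => DopL k x (Polynomial.monomial j (q.coeff j)))]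
  refine Finset.sum_congr rfl fun j _ => ?_
  rw [← Polynomial.smul_X_eq_monomial, _root_.map_smul, smul_eq_mul, DopL_apply]

lemma det_graded {M : ℕ} (kk : Fin M → ℕ) (xx : Fin M → ℝ) (P : Fin M → Polynomial ℝ)
    (hm : ∀ i, (P i).Monic) (hd : ∀ i, (P i).natDegree = (i:ℕ)) :
    Matrix.det (Matrix.of fun k i => Dop (kk k) (P i) (xx k))
      = Matrix.det (Matrix.of fun k j => Dop (kk k) (Polynomial.X ^ (j:ℕ)) (xx k)) := by
  have hfact : (Matrix.of fun k i => Dop (kk k) (P i) (xx k))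
      = (Matrix.of fun k j : Fin M => Dop (kk k) (Polynomial.X ^ (j:ℕ)) (xx k))
        * (Matrix.of fun j i : Fin M => (P i).coeff j) := by
    ext k i
    rw [Matrix.mul_apply, Matrix.of_apply, Dop_expand _ _ _ (by rw [hd]; exact i.isLt)]
    exact Finset.sum_congr rfl fun j _ => by simp [mul_comm]
  rw [hfact, Matrix.det_mul]
  have htri : (Matrix.of fun j i : Fin M => (P i).coeff j).BlockTriangular id := by
    intro i j hij
    exact Polynomial.coeff_eq_zero_of_natDegree_lt (by rw [hd]; exact hij)
  rw [Matrix.det_of_upperTriangular htri]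
  have : ∀ i : Fin M, (Matrix.of fun j i : Fin M => (P i).coeff j) i i = 1 := by
    intro i
    rw [Matrix.of_apply, ← hd i]
    exact (hm i).coeff_natDegree
  rw [Finset.prod_congr rfl fun i _ => this i, Finset.prod_const_one, mul_one]

lemma eval_zero_of_pow_dvd {a : ℝ} {q : Polynomial ℝ} {s ℓ : ℕ}
    (hdvd : (Polynomial.X - Polynomial.C a) ^ s ∣ q) (hl : ℓ < s) :
    (Polynomial.derivative^[ℓ] q).eval a = 0 := by
  obtain ⟨h, hh⟩ := Polynomial.pow_sub_dvd_iterate_derivative_of_pow_dvd ℓ hdvd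
  rw [hh, Polynomial.eval_mul, Polynomial.eval_pow, Polynomial.eval_sub, Polynomial.eval_X,
    Polynomial.eval_C, sub_self, zero_pow (by omega), zero_mul]

lemma det_full {N L : ℕ} (lam : Fin N → ℝ) (P : Fin (N*L) → Polynomial ℝ)
    (hm : ∀ i, (P i).Monic) (hd : ∀ i, (P i).natDegree = (i:ℕ)) :
    Matrix.det (Matrix.of fun k i : Fin (N*L) =>
        Dop ((finProdFinEquiv.symm k).2 : ℕ) (P i) (lam (finProdFinEquiv.symm k).1))
      = ∏ nn : Fin N,
          (∏ m ∈ Finset.univ.filter (fun m => m < nn), (lam nn - lam m)) ^ (L*L) := by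
  classical
  have hval : ∀ i : Fin (N*L),
      (i : ℕ) = ((finProdFinEquiv.symm i).2 : ℕ) + L * ((finProdFinEquiv.symm i).1 : ℕ) := by
    intro i
    conv_lhs => rw [← finProdFinEquiv.apply_symm_apply i]
    rfl
  have hcard : ∀ nn : Fin N,
      (Finset.univ.filter (fun m : Fin N => m < nn)).card = (nn : ℕ) := by
    intro nn
    rw [show Finset.univ.filter (fun m : Fin N => m < nn) = Finset.Iio nn by ext; simp,
      Fin.card_Iio]
  set f : Fin N → Polynomial ℝ := fun nn =>
    ∏ m ∈ Finset.univ.filter (fun m => m < nn), (Polynomial.X - Polynomial.C (lam m)) ^ L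
    with hfdef
  have hfm : ∀ nn, (f nn).Monic := fun nn =>
    Polynomial.monic_prod_of_monic _ _ fun m _ => (Polynomial.monic_X_sub_C _).pow L
  set Q : Fin (N*L) → Polynomial ℝ := fun i =>
    f (finProdFinEquiv.symm i).1 *
      (Polynomial.X - Polynomial.C (lam (finProdFinEquiv.symm i).1))
        ^ ((finProdFinEquiv.symm i).2 : ℕ) with hQdef
  have hQm : ∀ i, (Q i).Monic := fun i =>
    (hfm _).mul ((Polynomial.monic_X_sub_C _).pow _)
  have hQd : ∀ i, (Q i).natDegree = (i : ℕ) := by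
    intro i
    rw [hQdef]
    rw [(hfm _).natDegree_mul ((Polynomial.monic_X_sub_C _).pow _)]
    rw [hfdef]
    simp only [Polynomial.natDegree_pow, Polynomial.natDegree_X_sub_C, mul_one]
    rw [Polynomial.natDegree_prod_of_monic _ _
      (fun m _ => (Polynomial.monic_X_sub_C _).pow L)]
    simp only [Polynomial.natDegree_pow, Polynomial.natDegree_X_sub_C, mul_one]
    rw [Finset.sum_const, hcard, smul_eq_mul, hval i]
    ring
  rw [det_graded _ _ P hm hd, ← det_graded _ _ Q hQm hQd]
  set b : Fin (N*L) → (Fin N)ᵒᵈ :=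
    fun k => OrderDual.toDual (finProdFinEquiv.symm k).1 with hbdef
  set BQ : Matrix (Fin (N*L)) (Fin (N*L)) ℝ :=
    Matrix.of fun k i => Dop ((finProdFinEquiv.symm k).2 : ℕ) (Q i)
      (lam (finProdFinEquiv.symm k).1) with hBQdef
  have htri : BQ.BlockTriangular b := by
    intro r c h
    have hlt : (finProdFinEquiv.symm r).1 < (finProdFinEquiv.symm c).1 := h
    have hdvd : (Polynomial.X - Polynomial.C (lam (finProdFinEquiv.symm r).1)) ^ L ∣ Q c := by
      apply Dvd.dvd.mul_right
      exact Finset.dvd_prod_of_mem _ (Finset.mem_filter.mpr ⟨Finset.mem_univ _, hlt⟩)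
    show Dop _ (Q c) _ = 0
    rw [Dop, eval_zero_of_pow_dvd hdvd (finProdFinEquiv.symm r).2.isLt, zero_div]
  rw [htri.det_fintype]
  rw [← Fintype.prod_equiv (OrderDual.toDual (α := Fin N))
    (fun nn => (BQ.toSquareBlock b (OrderDual.toDual nn)).det)
    (fun a => (BQ.toSquareBlock b a).det) (fun nn => rfl)]
  refine Finset.prod_congr rfl fun nn _ => ?_
  -- per-block computation
  have hmem : ∀ ℓ : Fin L, b (finProdFinEquiv (nn, ℓ)) = OrderDual.toDual nn := by
    intro ℓ; show OrderDual.toDual (finProdFinEquiv.symm (finProdFinEquiv (nn, ℓ))).1 = _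
    rw [Equiv.symm_apply_apply]
  set eqB : {k : Fin (N*L) // b k = OrderDual.toDual nn} ≃ Fin L :=
    { toFun := fun k => (finProdFinEquiv.symm k.1).2
      invFun := fun ℓ => ⟨finProdFinEquiv (nn, ℓ), hmem ℓ⟩
      left_inv := by
        rintro ⟨k1, hk⟩
        have hk1 : (finProdFinEquiv.symm k1).1 = nn := OrderDual.toDual.injective hk
        apply Subtype.ext
        show finProdFinEquiv (nn, (finProdFinEquiv.symm k1).2) = k1
        rw [← hk1, Prod.mk.eta, Equiv.apply_symm_apply]
      right_inv := by
        intro ℓ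
        show (finProdFinEquiv.symm (finProdFinEquiv (nn, ℓ))).2 = ℓ
        rw [Equiv.symm_apply_apply] } with heqB
  rw [← Matrix.det_reindex_self eqB (BQ.toSquareBlock b (OrderDual.toDual nn))]
  set Mb := Matrix.reindex eqB eqB (BQ.toSquareBlock b (OrderDual.toDual nn)) with hMb
  have hent : ∀ ℓ ℓ' : Fin L, Mb ℓ ℓ'
      = Dop (ℓ : ℕ) (f nn * (Polynomial.X - Polynomial.C (lam nn)) ^ (ℓ' : ℕ)) (lam nn) := by
    intro ℓ ℓ'
    have hsymm : ∀ j : Fin L, (eqB.symm j : Fin (N*L)) = finProdFinEquiv (nn, j) := fun _ => rfl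
    rw [hMb, Matrix.reindex_apply, Matrix.submatrix_apply]
    show BQ (eqB.symm ℓ : Fin (N*L)) (eqB.symm ℓ' : Fin (N*L)) = _
    rw [hBQdef, hsymm, hsymm]
    simp only [Matrix.of_apply, Equiv.symm_apply_apply, hQdef]
  have htri2 : Mb.BlockTriangular OrderDual.toDual := by
    intro r c h
    have hlt : (r : Fin L) < c := h
    rw [hent]
    have hdvd : (Polynomial.X - Polynomial.C (lam nn)) ^ (c : ℕ)
        ∣ f nn * (Polynomial.X - Polynomial.C (lam nn)) ^ (c : ℕ) := dvd_mul_left _ _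
    rw [Dop, eval_zero_of_pow_dvd hdvd hlt, zero_div]
  rw [Matrix.det_of_lowerTriangular Mb htri2]
  have hdiag : ∀ ℓ : Fin L, Mb ℓ ℓ = (f nn).eval (lam nn) := by
    intro ℓ
    rw [hent, Dop, mul_comm, key_deriv]
    have : ((ℓ:ℕ).factorial : ℝ) ≠ 0 := Nat.cast_ne_zero.mpr (Nat.factorial_ne_zero _)
    field_simp
  rw [Finset.prod_congr rfl fun ℓ _ => hdiag ℓ, Finset.prod_const, Finset.card_univ,
    Fintype.card_fin]
  rw [hfdef]
  simp only [Polynomial.eval_prod, Polynomial.eval_pow, Polynomial.eval_sub, Polynomial.eval_X,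
    Polynomial.eval_C]
  rw [Finset.prod_pow, ← pow_mul]

lemma Wr_integrable {L n : ℕ} (ν : Measure ℝ) [IsFiniteMeasure ν]
    (hmom : ∀ k : ℕ, Integrable (fun x => x ^ k) ν)
    (p : Fin n → Polynomial ℝ) (t : Fin L → Fin n) :
    Integrable (fun x => Wr p t x) ν := by
  set W : Polynomial ℝ := Matrix.det (Matrix.of fun a ℓ : Fin L =>
    (((ℓ:ℕ).factorial : ℝ)⁻¹) • Polynomial.derivative^[(ℓ:ℕ)] (p (t a))) with hW
  have heq : ∀ x, Wr p t x = W.eval x := by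
    intro x
    rw [hW, Wr]
    rw [show W.eval x = (Polynomial.evalRingHom x) W from rfl]
    rw [hW, RingHom.map_det]
    congr 1
    ext a ℓ
    simp only [RingHom.mapMatrix_apply, Matrix.map_apply, Matrix.of_apply,
      Polynomial.coe_evalRingHom, Polynomial.eval_smul, Dop, smul_eq_mul, div_eq_inv_mul]
  simp only [heq]
  exact integrable_poly_eval ν hmom W

lemma minor_eq_Wr {M L : ℕ} (p : Fin M → Polynomial ℝ) (t : Fin L → Fin M) (x : ℝ) :
    minorA t (fun ℓ i => Dop (ℓ:ℕ) (p i) x) = Wr p t x := by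
  rw [minorA_apply, Wr, ← Matrix.det_transpose]
  congr 1

lemma pair_prod_eq {N L : ℕ} (hL : Even L) (lam : Fin N → ℝ) :
    ∏ q ∈ Finset.univ.filter (fun q : Fin N × Fin N => q.1 < q.2),
        |lam q.2 - lam q.1| ^ (L^2)
      = ∏ nn : Fin N,
          (∏ m ∈ Finset.univ.filter (fun m => m < nn), (lam nn - lam m)) ^ (L*L) := by
  have hEven : Even (L*L) := hL.mul_right L
  have habs : ∀ a : ℝ, |a| ^ (L^2) = a ^ (L*L) := by
    intro a
    rw [pow_two]
    exact hEven.pow_abs a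
  calc ∏ q ∈ Finset.univ.filter (fun q : Fin N × Fin N => q.1 < q.2),
          |lam q.2 - lam q.1| ^ (L^2)
      = ∏ q ∈ (Finset.univ : Finset (Fin N × Fin N)),
          (if q.1 < q.2 then (lam q.2 - lam q.1) ^ (L*L) else 1) := by
        rw [Finset.prod_filter]
        exact Finset.prod_congr rfl fun q _ => by rw [habs]
    _ = ∏ m : Fin N, ∏ nn : Fin N, (if m < nn then (lam nn - lam m) ^ (L*L) else 1) := by
        rw [← Finset.univ_product_univ, Finset.prod_product]
    _ = ∏ nn : Fin N, ∏ m : Fin N, (if m < nn then (lam nn - lam m) ^ (L*L) else 1) := by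
        rw [Finset.prod_comm]
    _ = ∏ nn : Fin N,
          (∏ m ∈ Finset.univ.filter (fun m => m < nn), (lam nn - lam m)) ^ (L*L) := by
        refine Finset.prod_congr rfl fun nn _ => ?_
        rw [← Finset.prod_filter, Finset.prod_pow]

lemma pointwise_vol {N L : ℕ} (p : Fin (N*L) → Polynomial ℝ)
    (hm : ∀ i, (p i).Monic) (hd : ∀ i, (p i).natDegree = (i:ℕ)) (lam : Fin N → ℝ) :
    (∏ nn : Fin N,
        (∏ m ∈ Finset.univ.filter (fun m => m < nn), (lam nn - lam m)) ^ (L*L))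
        • vol (N*L)
      = (List.ofFn fun nn : Fin N =>
          ∑ t ∈ Finset.univ.filter (fun t : Fin L → Fin (N*L) => StrictMono t),
            Wr p t (lam nn) • eps t).prod := by
  classical
  have hdet := det_full lam p hm hd
  have h1 := wedge_det (N*L)
    (fun k i => Dop ((finProdFinEquiv.symm k).2 : ℕ) (p i) (lam (finProdFinEquiv.symm k).1))
  rw [hdet] at h1
  rw [← h1, ExteriorAlgebra.ιMulti_apply]
  rw [List.ofFn_mul (fun k : Fin (N*L) => ExteriorAlgebra.ι ℝ
    (fun i => Dop ((finProdFinEquiv.symm k).2 : ℕ) (p i) (lam (finProdFinEquiv.symm k).1)))]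
  rw [List.prod_flatten, List.map_ofFn]
  refine congrArg List.prod (congrArg List.ofFn (funext fun nn => ?_))
  simp only [Function.comp]
  have hidx : ∀ (j : Fin L) (h : (nn:ℕ) * L + (j:ℕ) < N * L),
      (⟨(nn:ℕ) * L + (j:ℕ), h⟩ : Fin (N*L)) = finProdFinEquiv (nn, j) := by
    intro j h
    apply Fin.ext
    show (nn:ℕ) * L + (j:ℕ) = ((finProdFinEquiv (nn, j) : Fin (N*L)) : ℕ)
    show (nn:ℕ) * L + (j:ℕ) = (j:ℕ) + L * (nn:ℕ)
    ring
  simp only [hidx, Equiv.symm_apply_apply]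
  rw [← ExteriorAlgebra.ιMulti_apply, wedge_expand]
  refine Finset.sum_congr rfl fun t _ => ?_
  rw [minor_eq_Wr]


/-- hyperpfaffian formula for even square `β = L²`: if `L` is even and
`ω = ∑_𝔱 (∫ Wr(p_𝔱; x) dν(x)) ε_𝔱` (sum over strictly increasing `𝔱 : {1,…,L} → {1,…,NL}`),
then `Z_N = (1/N!) ∫_{ℝ^N} ∏_{m<n} |λ_n - λ_m|^{L²} dν^N(λ) = PF(ω)`,
where `PF(ω)` is defined by `ω^{∧N}/N! = PF(ω) ε_Vol`. -/
theorem stmt7 (L N : ℕ) (hL : Even L) (hL0 : 0 < L) (hN : 1 ≤ N)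
    (ν : Measure ℝ) [IsFiniteMeasure ν]
    (hmom : ∀ k : ℕ, Integrable (fun x => x ^ k) ν)
    (p : Fin (N*L) → Polynomial ℝ)
    (hmonic : ∀ i, (p i).Monic) (hdeg : ∀ i, (p i).natDegree = (i : ℕ))
    (c : ℝ)
    (hc : (∑ t ∈ Finset.univ.filter (fun t : Fin L → Fin (N*L) => StrictMono t),
        (∫ x, Wr p t x ∂ν) • eps t) ^ N
      = ((Nat.factorial N : ℝ) * c) • vol (N*L)) :
    (1 / (Nat.factorial N : ℝ)) *
      ∫ l : Fin N → ℝ,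
        (∏ q ∈ Finset.univ.filter (fun q : Fin N × Fin N => q.1 < q.2),
          |l q.2 - l q.1| ^ (L^2)) ∂(Measure.pi fun _ => ν) = c := by
  classical
  have hint : (fun l : Fin N → ℝ =>
      ∏ q ∈ Finset.univ.filter (fun q : Fin N × Fin N => q.1 < q.2),
        |l q.2 - l q.1| ^ (L^2))
      = fun l => ∏ nn : Fin N,
          (∏ m ∈ Finset.univ.filter (fun m => m < nn), (l nn - l m)) ^ (L*L) :=
    funext fun l => pair_prod_eq hL l
  rw [hint]
  have hmemiff : ∀ t : Fin L → Fin (N*L),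
      t ∈ Finset.univ.filter (fun t : Fin L → Fin (N*L) => StrictMono t) ↔ StrictMono t := by
    intro t; simp
  have hsum : ∀ (x : ℝ),
      (∑ t ∈ Finset.univ.filter (fun t : Fin L → Fin (N*L) => StrictMono t),
        Wr p t x • eps t)
      = ∑ tt : {t : Fin L → Fin (N*L) // StrictMono t}, Wr p tt.1 x • eps tt.1 :=
    fun x => Finset.sum_subtype _ hmemiff _
  have homega : (∑ t ∈ Finset.univ.filter (fun t : Fin L → Fin (N*L) => StrictMono t),
        (∫ x, Wr p t x ∂ν) • eps t)
      = ∑ tt : {t : Fin L → Fin (N*L) // StrictMono t}, (∫ x, Wr p tt.1 x ∂ν) • eps tt.1 :=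
    Finset.sum_subtype _ hmemiff _
  set Ef : ((Fin N) → {t : Fin L → Fin (N*L) // StrictMono t}) →
      ExteriorAlgebra ℝ (Fin (N*L) → ℝ) :=
    fun f => (List.ofFn fun n => eps (f n).1).prod with hEf
  have hpt : ∀ lam : Fin N → ℝ,
      (∏ nn : Fin N, (∏ m ∈ Finset.univ.filter (fun m => m < nn), (lam nn - lam m)) ^ (L*L))
      = ∑ f : Fin N → {t : Fin L → Fin (N*L) // StrictMono t},
          (∏ n, Wr p (f n).1 (lam n)) * phi0 (N*L) (Ef f) := by
    intro lam
    have h := congrArg (phi0 (N*L)) (pointwise_vol p hmonic hdeg lam)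
    rw [_root_.map_smul, phi0_vol, smul_eq_mul, mul_one] at h
    rw [h]
    have h2 : (List.ofFn fun nn : Fin N =>
        ∑ t ∈ Finset.univ.filter (fun t : Fin L → Fin (N*L) => StrictMono t),
          Wr p t (lam nn) • eps t)
        = List.ofFn fun nn : Fin N =>
            ∑ tt : {t : Fin L → Fin (N*L) // StrictMono t}, Wr p tt.1 (lam nn) • eps tt.1 :=
      congrArg _ (funext fun nn => hsum (lam nn))
    rw [h2, list_prod_ofFn_sum N (fun (n : Fin N) (tt : {t : Fin L → Fin (N*L) // StrictMono t}) => Wr p tt.1 (lam n) • eps tt.1), map_sum]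
    refine Finset.sum_congr rfl fun f _ => ?_
    rw [list_prod_ofFn_smul N (fun n => Wr p (f n).1 (lam n)) (fun n => eps (f n).1),
      _root_.map_smul, smul_eq_mul]
  have homegaN : (∑ t ∈ Finset.univ.filter (fun t : Fin L → Fin (N*L) => StrictMono t),
        (∫ x, Wr p t x ∂ν) • eps t) ^ N
      = ∑ f : Fin N → {t : Fin L → Fin (N*L) // StrictMono t},
          (∏ n, ∫ x, Wr p (f n).1 x ∂ν) • Ef f := by
    rw [homega]
    rw [show (∑ tt : {t : Fin L → Fin (N*L) // StrictMono t},
        (∫ x, Wr p tt.1 x ∂ν) • eps tt.1) ^ N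
      = (List.ofFn fun _ : Fin N => ∑ tt : {t : Fin L → Fin (N*L) // StrictMono t},
          (∫ x, Wr p tt.1 x ∂ν) • eps tt.1).prod by
        rw [List.ofFn_const, List.prod_replicate]]
    rw [list_prod_ofFn_sum N (fun (_ : Fin N) (tt : {t : Fin L → Fin (N*L) // StrictMono t}) => (∫ x, Wr p tt.1 x ∂ν) • eps tt.1)]
    refine Finset.sum_congr rfl fun f _ => ?_
    rw [list_prod_ofFn_smul N (fun n => ∫ x, Wr p (f n).1 x ∂ν) (fun n => eps (f n).1)]
  have hZ : (∫ lam : Fin N → ℝ, ∏ nn : Fin N,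
        (∏ m ∈ Finset.univ.filter (fun m => m < nn), (lam nn - lam m)) ^ (L*L)
        ∂(Measure.pi fun _ => ν))
      = (Nat.factorial N : ℝ) * c := by
    calc (∫ lam : Fin N → ℝ, ∏ nn : Fin N,
          (∏ m ∈ Finset.univ.filter (fun m => m < nn), (lam nn - lam m)) ^ (L*L)
          ∂(Measure.pi fun _ => ν))
        = ∫ lam : Fin N → ℝ, (∑ f : Fin N → {t : Fin L → Fin (N*L) // StrictMono t},
            (∏ n, Wr p (f n).1 (lam n)) * phi0 (N*L) (Ef f)) ∂(Measure.pi fun _ => ν) := by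
          exact congrArg _ (funext fun lam => hpt lam)
      _ = ∑ f : Fin N → {t : Fin L → Fin (N*L) // StrictMono t},
            ∫ lam : Fin N → ℝ, (∏ n, Wr p (f n).1 (lam n)) * phi0 (N*L) (Ef f)
              ∂(Measure.pi fun _ => ν) := by
          refine integral_finset_sum _ fun f _ => ?_
          exact (integrable_pi_prod' N ν ‹_› (fun n => fun x => Wr p (f n).1 x)
            (fun n => Wr_integrable ν hmom p (f n).1)).mul_const _
      _ = ∑ f : Fin N → {t : Fin L → Fin (N*L) // StrictMono t},
            (∏ n, ∫ x, Wr p (f n).1 x ∂ν) * phi0 (N*L) (Ef f) := by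
          refine Finset.sum_congr rfl fun f _ => ?_
          rw [MeasureTheory.integral_mul_const, integral_pi_prod' N ν ‹_›]
      _ = phi0 (N*L) (∑ f : Fin N → {t : Fin L → Fin (N*L) // StrictMono t},
            (∏ n, ∫ x, Wr p (f n).1 x ∂ν) • Ef f) := by
          rw [map_sum]
          exact Finset.sum_congr rfl fun f _ => by rw [_root_.map_smul, smul_eq_mul]
      _ = (Nat.factorial N : ℝ) * c := by
          rw [← homegaN, hc, _root_.map_smul, phi0_vol, smul_eq_mul, mul_one]
  rw [hZ, one_div, inv_mul_cancel_left₀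
    (Nat.cast_ne_zero.mpr (Nat.factorial_ne_zero N) : (Nat.factorial N : ℝ) ≠ 0)]
end

section
/- Decomposition of interleaving tuples: Let $L, M \geq 1$ and $N = 2M$. Every $N$-tuple $(\mathfrak u_1,\ldots,\mathfrak u_N)$ of strictly increasing functions $\{1,\ldots,L\}\to\{1,\ldots,NL\}$ with pairwise disjoint ranges covering $\{1,\ldots,NL\}$ can be written uniquely as $\mathfrak u_{2m-1} = \mathfrak v_m\circ\mathfrak w_m$ and $\mathfrak u_{2m} = \mathfrak v_m\circ\mathfrak w_m'$ for $m = 1,\ldots,M$, where $(\mathfrak v_1,\ldots,\mathfrak v_M)$ are strictly increasing functions $\{1,\ldots,2L\}\to\{1,\ldots,2LM\}$ with pairwise disjoint ranges covering $\{1,\ldots,2LM\}$, each $\mathfrak w_m$ is a strictly increasing function $\{1,\ldots,L\}\to\{1,\ldots,2L\}$, and $\mathfrak w_m'$ is the unique strictly increasing function $\{1,\ldots,L\}\to\{1,\ldots,2L\}$ whose range is the complement of the range of $\mathfrak w_m$. Moreover, $\mathrm{sgn}(\mathfrak u_1,\ldots,\mathfrak u_N) = \mathrm{sgn}(\mathfrak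 v_1,\ldots,\mathfrak v_M)\prod_{m=1}^M \mathrm{sgn}\,\mathfrak w_m$. -/
open scoped Classical

/-- The concatenation `(𝔱_1(1), …, 𝔱_1(L), 𝔱_2(1), …, 𝔱_N(L))` of a tuple of functions,
as a map `Fin (N*L) → Fin n`. -/
def concatMap {N L n : ℕ} (hL : 0 < L) (T : Fin N → Fin L → Fin n) (i : Fin (N*L)) : Fin n :=
  T ⟨(i:ℕ)/L, Nat.div_lt_of_lt_mul (Nat.lt_of_lt_of_le i.isLt (Nat.le_of_eq (Nat.mul_comm N L)))⟩
    ⟨(i:ℕ) % L, Nat.mod_lt _ hL⟩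

/-- The sign `sgn(𝔱_1, …, 𝔱_N)` defined by
`ε_{𝔱_1} ∧ ⋯ ∧ ε_{𝔱_N} = sgn(𝔱_1, …, 𝔱_N) ε_Vol`; equivalently, the sign of the
permutation sending `(1, …, NL)` to `(𝔱_1(1), …, 𝔱_N(L))` when the ranges of the `𝔱`'s
partition the index set, and `0` otherwise. -/
noncomputable def tupleSign {N L n : ℕ} (hL : 0 < L) (T : Fin N → Fin L → Fin n) : ℝ :=
  if hb : Function.Bijective (concatMap hL T) then
    ((Equiv.Perm.sign ((Equiv.ofBijective _ hb).trans
        (finCongr (show n = N * L by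
          simpa using (Fintype.card_congr (Equiv.ofBijective _ hb)).symm))) : ℤ) : ℝ)
  else 0

lemma idx_lt {N L : ℕ} {k r : ℕ} (hk : k < N) (hr : r < L) : k*L + r < N*L :=
  calc k*L + r < k*L + L := Nat.add_lt_add_left hr _
    _ = (k+1)*L := by ring
    _ ≤ N*L := Nat.mul_le_mul_right L hk

lemma concatMap_apply' {N L n : ℕ} (hL : 0 < L) (T : Fin N → Fin L → Fin n)
    (i : Fin (N*L)) (k : Fin N) (r : Fin L) (h : (i:ℕ) = k*L + r) :
    concatMap hL T i = T k r := by
  have h1 : (i:ℕ)/L = k := by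
    rw [h, Nat.mul_comm, Nat.mul_add_div hL, Nat.div_eq_of_lt r.isLt, Nat.add_zero]
  have h2 : (i:ℕ)%L = r := by
    rw [h, Nat.add_comm, Nat.add_mul_mod_self_right, Nat.mod_eq_of_lt r.isLt]
  exact congr (congrArg T (Fin.ext h1)) (Fin.ext h2)

lemma concatMap_eq_apply {N L n : ℕ} (hL : 0 < L) (T : Fin N → Fin L → Fin n)
    (k : Fin N) (r : Fin L) :
    T k r = concatMap hL T ⟨k*L + r, idx_lt k.isLt r.isLt⟩ :=
  (concatMap_apply' hL T _ k r rfl).symm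

lemma concatMap_pairInj {N L n : ℕ} (hL : 0 < L) (T : Fin N → Fin L → Fin n)
    (hinj : Function.Injective (concatMap hL T))
    {k k' : Fin N} {r r' : Fin L} (h : T k r = T k' r') : k = k' ∧ r = r' := by
  have heq := hinj (a₁ := ⟨k*L+r, idx_lt k.isLt r.isLt⟩) (a₂ := ⟨k'*L+r', idx_lt k'.isLt r'.isLt⟩)
    (by rw [← concatMap_eq_apply, ← concatMap_eq_apply]; exact h)
  have e : (k:ℕ)*L + r = (k':ℕ)*L + r' := by simpa using congrArg Fin.val heq
  have hk : (k:ℕ) = k' := by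
    have := congrArg (· / L) e
    simpa [Nat.mul_comm _ L, Nat.mul_add_div hL, Nat.div_eq_of_lt r.isLt,
      Nat.div_eq_of_lt r'.isLt] using this
  refine ⟨Fin.ext hk, Fin.ext ?_⟩
  rw [hk] at e
  exact Nat.add_left_cancel e

lemma concatMap_prod {N L n : ℕ} (hL : 0 < L) (T : Fin N → Fin L → Fin n)
    (k : Fin N) (r : Fin L) :
    concatMap hL T (finProdFinEquiv (k, r)) = T k r :=
  concatMap_apply' hL T _ k r (by simp [finProdFinEquiv]; ring)

lemma tupleSign_eq_sign' {N L n : ℕ} (hL : 0 < L) (T : Fin N → Fin L → Fin n)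
    (hb : Function.Bijective (concatMap hL T)) (h : n = N*L) :
    tupleSign hL T =
      ((Equiv.Perm.sign ((Equiv.ofBijective _ hb).trans (finCongr h)) : ℤ) : ℝ) := by
  rw [tupleSign, dif_pos hb]

lemma tupleSign_eq_sign {N L : ℕ} (hL : 0 < L) (T : Fin N → Fin L → Fin (N*L))
    (hb : Function.Bijective (concatMap hL T)) :
    tupleSign hL T = ((Equiv.Perm.sign (Equiv.ofBijective _ hb) : ℤ) : ℝ) := by
  rw [tupleSign_eq_sign' hL T hb rfl]
  norm_cast

lemma sign_decomp (L M : ℕ) (hL : 0 < L)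
    (U : Fin (2*M) → Fin L → Fin ((2*M)*L))
    (hbij : Function.Bijective (concatMap hL U))
    (V : Fin M → Fin (2*L) → Fin ((2*M)*L))
    (W W' : Fin M → Fin L → Fin (2*L))
    (hV : Function.Bijective (concatMap (show (0:ℕ) < 2*L by omega) V))
    (hWc : ∀ m, Set.range (W' m) = (Set.range (W m))ᶜ)
    (hcomp : ∀ m : Fin M,
        U ⟨2*(m:ℕ), by have hm := m.isLt; zify at hm ⊢; omega⟩ = V m ∘ W m ∧
        U ⟨2*(m:ℕ)+1, by have hm := m.isLt; zify at hm ⊢; omega⟩ = V m ∘ W' m) :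
    tupleSign hL U = tupleSign (show (0:ℕ) < 2*L by omega) V *
      ∏ m : Fin M, tupleSign hL ![W m, W' m] := by
  have h2L : (0:ℕ) < 2*L := by omega
  have hc : (2*M)*L = M*(2*L) := by ring
  -- bijectivity of each pair concatenation
  have hcW : ∀ m, Function.Bijective (concatMap hL ![W m, W' m]) := by
    intro m
    refine Finite.surjective_iff_bijective.mp ?_
    intro y
    by_cases hy : y ∈ Set.range (W m)
    · obtain ⟨r, hr⟩ := hy
      refine ⟨⟨(r:ℕ), by have := r.isLt; omega⟩, ?_⟩
      rw [concatMap_apply' hL _ _ (0 : Fin 2) r (by simp)]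
      simpa using hr
    · have hy' : y ∈ Set.range (W' m) := by rw [hWc m]; exact hy
      obtain ⟨r, hr⟩ := hy'
      refine ⟨⟨L + (r:ℕ), by have := r.isLt; omega⟩, ?_⟩
      rw [concatMap_apply' hL _ _ (1 : Fin 2) r (by simp)]
      simpa using hr
  set τ : Fin M → Equiv.Perm (Fin (2*L)) := fun m => Equiv.ofBijective _ (hcW m) with hτ
  set e2 : Fin M × Fin (2*L) ≃ Fin (M*(2*L)) := finProdFinEquiv with he2
  set F : Fin (M*(2*L)) ≃ Fin ((2*M)*L) := finCongr hc.symm with hF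
  set P : Equiv.Perm (Fin (M*(2*L))) := e2.permCongr (Equiv.prodCongrRight τ) with hP
  have key : ∀ j : Fin (M*(2*L)), concatMap hL U (F j) = concatMap h2L V (P j) := by
    intro j
    obtain ⟨⟨m, x⟩, rfl⟩ := e2.surjective j
    have hPj : P (e2 (m, x)) = e2 (m, τ m x) := by
      rw [hP, Equiv.permCongr_apply, Equiv.symm_apply_apply, Equiv.prodCongrRight_apply]
    rw [hPj, he2, concatMap_prod]
    obtain ⟨⟨b, s⟩, hbs⟩ := finProdFinEquiv.surjective x
    have hx : (x:ℕ) = (b:ℕ)*L + (s:ℕ) := by rw [← hbs]; simp [finProdFinEquiv]; ring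
    have hτx : τ m x = ![W m, W' m] b s :=
      concatMap_apply' hL (![W m, W' m]) x b s hx
    have hlt : 2*(m:ℕ)+(b:ℕ) < 2*M := by have := m.isLt; have := b.isLt; omega
    have hFj : ((F (e2 (m,x))) : ℕ) = (2*(m:ℕ)+(b:ℕ))*L + (s:ℕ) := by
      simp only [hF, he2, finCongr_apply, Fin.coe_cast, finProdFinEquiv_apply_val]
      rw [hx]; ring
    rw [concatMap_apply' hL U _ ⟨2*(m:ℕ)+(b:ℕ), hlt⟩ s hFj, hτx]
    fin_cases b
    · simpa using congrFun (hcomp m).1 s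
    · simpa using congrFun (hcomp m).2 s
  have hperm : Equiv.ofBijective _ hbij =
      (F.permCongr P).trans (F.symm.trans (Equiv.ofBijective _ hV)) := by
    apply Equiv.ext
    intro i
    have hk := key (F.symm i)
    rw [Equiv.apply_symm_apply] at hk
    simp only [Equiv.trans_apply, Equiv.permCongr_apply, Equiv.symm_apply_apply]
    exact hk
  have h2 : F.symm.trans (Equiv.ofBijective _ hV)
      = F.permCongr ((Equiv.ofBijective _ hV).trans (finCongr hc)) := by
    apply Equiv.ext
    intro x
    apply Fin.ext
    simp [hF]
  have hsign : Equiv.Perm.sign (Equiv.ofBijective _ hbij) =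
      Equiv.Perm.sign ((Equiv.ofBijective _ hV).trans (finCongr hc))
        * ∏ m, Equiv.Perm.sign (τ m) := by
    rw [hperm]
    have h1 : (F.permCongr P).trans (F.symm.trans (Equiv.ofBijective _ hV))
        = (F.symm.trans (Equiv.ofBijective _ hV)) * (F.permCongr P) := rfl
    have s1 : Equiv.Perm.sign (F.permCongr P) = ∏ m, Equiv.Perm.sign (τ m) := by
      rw [Equiv.Perm.sign_permCongr, hP, Equiv.Perm.sign_permCongr,
        Equiv.Perm.sign_prodCongrRight]
    rw [h1, map_mul, h2, Equiv.Perm.sign_permCongr, s1]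
  rw [tupleSign_eq_sign hL U hbij, tupleSign_eq_sign' h2L V hV hc]
  have hws : ∀ m, tupleSign hL ![W m, W' m] = ((Equiv.Perm.sign (τ m) : ℤ) : ℝ) := fun m =>
    tupleSign_eq_sign hL _ (hcW m)
  simp only [hws]
  rw [hsign]
  push_cast
  ring

section constr
variable {L M : ℕ}

/-- index `2m`. -/
def i0 (m : Fin M) : Fin (2*M) := ⟨2*(m:ℕ), by have := m.isLt; omega⟩
/-- index `2m+1`. -/
def i1 (m : Fin M) : Fin (2*M) := ⟨2*(m:ℕ)+1, by have := m.isLt; omega⟩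

/-- the union of the ranges of `U (2m)` and `U (2m+1)`. -/
def Sfin (U : Fin (2*M) → Fin L → Fin ((2*M)*L)) (m : Fin M) : Finset (Fin ((2*M)*L)) :=
  Finset.image (U (i0 m)) Finset.univ ∪ Finset.image (U (i1 m)) Finset.univ

lemma mem_Sfin {U : Fin (2*M) → Fin L → Fin ((2*M)*L)} {m : Fin M} {y : Fin ((2*M)*L)} :
    y ∈ Sfin U m ↔ (∃ r, U (i0 m) r = y) ∨ (∃ r, U (i1 m) r = y) := by
  simp [Sfin]

lemma Sfin_card (hL : 0 < L) (U : Fin (2*M) → Fin L → Fin ((2*M)*L))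
    (hU : ∀ m, StrictMono (U m)) (hinj : Function.Injective (concatMap hL U)) (m : Fin M) :
    (Sfin U m).card = 2*L := by
  rw [Sfin, Finset.card_union_of_disjoint, Finset.card_image_of_injective _ (hU _).injective,
    Finset.card_image_of_injective _ (hU _).injective, Finset.card_univ, Fintype.card_fin]
  · omega
  · rw [Finset.disjoint_left]
    rintro a ha hb
    simp only [Finset.mem_image] at ha hb
    obtain ⟨r, -, hr⟩ := ha
    obtain ⟨r', -, hr'⟩ := hb
    have hk := congrArg Fin.val (concatMap_pairInj hL U hinj (hr.trans hr'.symm)).1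
    simp only [i0, i1] at hk
    omega

lemma Sfin_disjoint (hL : 0 < L) (U : Fin (2*M) → Fin L → Fin ((2*M)*L))
    (hinj : Function.Injective (concatMap hL U)) {m m' : Fin M} (h : m ≠ m') :
    Disjoint (Sfin U m) (Sfin U m') := by
  have hm : (m:ℕ) ≠ (m':ℕ) := fun hh => h (Fin.ext hh)
  rw [Finset.disjoint_left]
  intro a ha hb
  rcases mem_Sfin.mp ha with ⟨r, hr⟩ | ⟨r, hr⟩ <;>
    rcases mem_Sfin.mp hb with ⟨r', hr'⟩ | ⟨r', hr'⟩ <;>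
  · have hk := congrArg Fin.val (concatMap_pairInj hL U hinj (hr.trans hr'.symm)).1
    simp only [i0, i1] at hk
    omega

end constr

/-- decomposition of interleaving tuples: every `2M`-tuple
`(𝔲_1, …, 𝔲_{2M})` of strictly increasing maps `{1,…,L} → {1,…,2ML}` with pairwise
disjoint ranges covering the index set is uniquely of the form
`𝔲_{2m-1} = 𝔳_m ∘ 𝔴_m`, `𝔲_{2m} = 𝔳_m ∘ 𝔴_m'`, with the `𝔳`'s strictly increasing with
disjoint ranges covering the index set, the `𝔴`'s strictly increasing
`{1,…,L} → {1,…,2L}` and `𝔴'` the strictly increasing map with complementary range;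
moreover `sgn(𝔲_1, …, 𝔲_{2M}) = sgn(𝔳_1, …, 𝔳_M) ∏_m sgn 𝔴_m`. -/
theorem stmt19 (L M : ℕ) (hL : 0 < L) (hM : 1 ≤ M)
    (U : Fin (2*M) → Fin L → Fin ((2*M)*L))
    (hU : ∀ m, StrictMono (U m))
    (hbij : Function.Bijective (concatMap hL U)) :
    (∃! vw : (Fin M → Fin (2*L) → Fin ((2*M)*L)) ×
        (Fin M → Fin L → Fin (2*L)) × (Fin M → Fin L → Fin (2*L)),
      (∀ m, StrictMono (vw.1 m)) ∧
      Function.Bijective (concatMap (by omega : 0 < 2*L) vw.1) ∧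
      (∀ m, StrictMono (vw.2.1 m)) ∧ (∀ m, StrictMono (vw.2.2 m)) ∧
      (∀ m, Set.range (vw.2.2 m) = (Set.range (vw.2.1 m))ᶜ) ∧
      (∀ m : Fin M,
        U ⟨2*(m:ℕ), by have := m.isLt; omega⟩ = vw.1 m ∘ vw.2.1 m ∧
        U ⟨2*(m:ℕ)+1, by have := m.isLt; omega⟩ = vw.1 m ∘ vw.2.2 m)) ∧
    (∀ vw : (Fin M → Fin (2*L) → Fin ((2*M)*L)) ×
        (Fin M → Fin L → Fin (2*L)) × (Fin M → Fin L → Fin (2*L)),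
      ((∀ m, StrictMono (vw.1 m)) ∧
       Function.Bijective (concatMap (by omega : 0 < 2*L) vw.1) ∧
       (∀ m, StrictMono (vw.2.1 m)) ∧ (∀ m, StrictMono (vw.2.2 m)) ∧
       (∀ m, Set.range (vw.2.2 m) = (Set.range (vw.2.1 m))ᶜ) ∧
       (∀ m : Fin M,
         U ⟨2*(m:ℕ), by have := m.isLt; omega⟩ = vw.1 m ∘ vw.2.1 m ∧
         U ⟨2*(m:ℕ)+1, by have := m.isLt; omega⟩ = vw.1 m ∘ vw.2.2 m)) →
      tupleSign hL U =
        tupleSign (by omega : 0 < 2*L) vw.1 *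
          ∏ m : Fin M, tupleSign hL ![vw.2.1 m, vw.2.2 m]) := by
  classical
  have h2L : (0:ℕ) < 2*L := by omega
  have hinj := hbij.1
  have hcard : ∀ m : Fin M, (Sfin U m).card = 2*L := Sfin_card hL U hU hinj
  set V : Fin M → Fin (2*L) → Fin ((2*M)*L) :=
    fun m => ⇑((Sfin U m).orderEmbOfFin (hcard m)) with hVdef
  have mem0 : ∀ (m : Fin M) (r : Fin L), U (i0 m) r ∈ Sfin U m := fun m r =>
    mem_Sfin.mpr (Or.inl ⟨r, rfl⟩)
  have mem1 : ∀ (m : Fin M) (r : Fin L), U (i1 m) r ∈ Sfin U m := fun m r =>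
    mem_Sfin.mpr (Or.inr ⟨r, rfl⟩)
  set W : Fin M → Fin L → Fin (2*L) := fun m r =>
    ((Sfin U m).orderIsoOfFin (hcard m)).symm ⟨U (i0 m) r, mem0 m r⟩ with hWdef
  set W' : Fin M → Fin L → Fin (2*L) := fun m r =>
    ((Sfin U m).orderIsoOfFin (hcard m)).symm ⟨U (i1 m) r, mem1 m r⟩ with hW'def
  have hVW : ∀ m r, V m (W m r) = U (i0 m) r := by
    intro m r
    show ((Sfin U m).orderEmbOfFin (hcard m))
      (((Sfin U m).orderIsoOfFin (hcard m)).symm ⟨U (i0 m) r, mem0 m r⟩) = _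
    rw [← Finset.coe_orderIsoOfFin_apply, OrderIso.apply_symm_apply]
  have hVW' : ∀ m r, V m (W' m r) = U (i1 m) r := by
    intro m r
    show ((Sfin U m).orderEmbOfFin (hcard m))
      (((Sfin U m).orderIsoOfFin (hcard m)).symm ⟨U (i1 m) r, mem1 m r⟩) = _
    rw [← Finset.coe_orderIsoOfFin_apply, OrderIso.apply_symm_apply]
  have hVmono : ∀ m, StrictMono (V m) := fun m => ((Sfin U m).orderEmbOfFin (hcard m)).strictMono
  have hVinj : ∀ m, Function.Injective (V m) := fun m => (hVmono m).injective
  have hWmono : ∀ m, StrictMono (W m) := by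
    intro m a b hab
    exact (((Sfin U m).orderIsoOfFin (hcard m)).symm).strictMono
      (Subtype.mk_lt_mk.mpr (hU _ hab))
  have hW'mono : ∀ m, StrictMono (W' m) := by
    intro m a b hab
    exact (((Sfin U m).orderIsoOfFin (hcard m)).symm).strictMono
      (Subtype.mk_lt_mk.mpr (hU _ hab))
  have hWrange : ∀ m, Set.range (W' m) = (Set.range (W m))ᶜ := by
    intro m
    ext x
    have hx : (V m x) ∈ Sfin U m := Finset.orderEmbOfFin_mem _ _ _
    constructor
    · rintro ⟨r, rfl⟩ ⟨r', hr'⟩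
      have hUU : U (i1 m) r = U (i0 m) r' := by rw [← hVW' m r, ← hVW m r', hr']
      have hk := congrArg Fin.val (concatMap_pairInj hL U hinj hUU).1
      simp only [i0, i1] at hk
      omega
    · intro hxW
      rcases mem_Sfin.mp hx with ⟨r, hr⟩ | ⟨r, hr⟩
      · exact absurd ⟨r, hVinj m (by rw [hVW m r]; exact hr)⟩ hxW
      · exact ⟨r, hVinj m (by rw [hVW' m r]; exact hr)⟩
  have hVbij : Function.Bijective (concatMap h2L V) := by
    rw [Fintype.bijective_iff_injective_and_card]
    refine ⟨?_, by simp [Fintype.card_fin]; ring⟩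
    rw [← Equiv.injective_comp (finProdFinEquiv : Fin M × Fin (2*L) ≃ Fin (M*(2*L)))]
    rintro ⟨m, x⟩ ⟨m', x'⟩ h
    simp only [Function.comp_apply] at h
    rw [concatMap_prod, concatMap_prod] at h
    have hmm : m = m' := by
      by_contra hne
      have h1 : V m x ∈ Sfin U m := Finset.orderEmbOfFin_mem _ _ _
      have h2 : V m x ∈ Sfin U m' := h ▸ Finset.orderEmbOfFin_mem _ _ _
      exact (Finset.disjoint_left.mp (Sfin_disjoint hL U hinj hne)) h1 h2
    subst hmm
    exact congrArg (Prod.mk m) (hVinj m h)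
  have hcompcan : ∀ m : Fin M,
      U ⟨2*(m:ℕ), by have := m.isLt; omega⟩ = V m ∘ W m ∧
      U ⟨2*(m:ℕ)+1, by have := m.isLt; omega⟩ = V m ∘ W' m := fun m =>
    ⟨funext fun r => (hVW m r).symm, funext fun r => (hVW' m r).symm⟩
  constructor
  · refine ⟨⟨V, W, W'⟩, ⟨hVmono, hVbij, hWmono, hW'mono, hWrange, hcompcan⟩, ?_⟩
    rintro ⟨V₂, W₂, W₂'⟩ ⟨hV₂mono, hV₂bij, hW₂mono, hW₂'mono, hW₂range, hcomp₂⟩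
    have hV₂ : V₂ = V := by
      funext m
      have hmem : ∀ x, V₂ m x ∈ Sfin U m := by
        intro x
        have hx : x ∈ Set.range (W₂ m) ∨ x ∈ Set.range (W₂' m) := by
          by_cases hh : x ∈ Set.range (W₂ m)
          · exact Or.inl hh
          · exact Or.inr (by rw [hW₂range m]; exact hh)
        rcases hx with ⟨r, rfl⟩ | ⟨r, rfl⟩
        · exact mem_Sfin.mpr (Or.inl ⟨r, congrFun (hcomp₂ m).1 r⟩)
        · exact mem_Sfin.mpr (Or.inr ⟨r, congrFun (hcomp₂ m).2 r⟩)
      exact Finset.orderEmbOfFin_unique (hcard m) hmem (hV₂mono m)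
    have hW₂ : W₂ = W := by
      funext m r
      apply hVinj m
      rw [hVW m r]
      have hh := congrFun (hcomp₂ m).1 r
      rw [hV₂] at hh
      exact hh.symm
    have hW₂' : W₂' = W' := by
      funext m r
      apply hVinj m
      rw [hVW' m r]
      have hh := congrFun (hcomp₂ m).2 r
      rw [hV₂] at hh
      exact hh.symm
    simp only [Prod.mk.injEq]
    exact ⟨hV₂, hW₂, hW₂'⟩
  · rintro ⟨V₂, W₂, W₂'⟩ ⟨hV₂mono, hV₂bij, hW₂mono, hW₂'mono, hW₂range, hcomp₂⟩
    exact sign_decomp L M hL U hbij V₂ W₂ W₂' hV₂bij hW₂range hcomp₂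
end
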